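/- arXiv:2509.06062 — 5 statements merged into one kernel-verified Lean document; each statement's English description precedes it below -/
import Mathlib

section
/- Let f, g : ℝ² → ℝ be C¹ and let γ : [0,1] → (0,∞)×(0,∞) be a C¹ curve such that for all t ∈ [0,1]: γ'(t) ≠ 0, the gradient ∇f(γ(t)) ≠ 0, and f(γ(t)) = 0 (γ lies on the f-isocline). Suppose g(γ(0)) = 0, g(γ(1)) = 0, g(γ(t)) ≠ 0 for all t ∈ (0,1), and the derivatives of t ↦ g(γ(t)) at t = 0 and t = 1 are nonzero (the isoclines cross transversally at the two equilibria). Define D(p) = (∂f/∂x)(p)·(∂g/∂y)(p) − (∂f/∂y)(p)·(∂g/∂x)(p). Then D(γ(0))·D(γ(1)) < 0; i.e., the sign of the Jacobian determinant of the system ẋ = x·f(x,y), ẏ = y·g(x,y) alternates at consecutive equilibria along the isocline, so equilibria of index +1 and index −1 alternate (Theorem 3.1, C¹ transversal form). -/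
open Set

/-- Partial derivative with respect to the first coordinate. -/
noncomputable def pdx (f : ℝ × ℝ → ℝ) (p : ℝ × ℝ) : ℝ := fderiv ℝ f p (1, 0)

/-- Partial derivative with respect to the second coordinate. -/
noncomputable def pdy (f : ℝ × ℝ → ℝ) (p : ℝ × ℝ) : ℝ := fderiv ℝ f p (0, 1)

/-- D(p) = f_x g_y - f_y g_x, the sign-determining factor of the Jacobian
determinant of the system ẋ = x f(x,y), ẏ = y g(x,y) at an interior equilibrium. -/
noncomputable def Dfun (f g : ℝ × ℝ → ℝ) (p : ℝ × ℝ) : ℝ :=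
  pdx f p * pdy g p - pdy f p * pdx g p

lemma eval_clm (L : ℝ × ℝ →L[ℝ] ℝ) (w : ℝ × ℝ) :
    L w = w.1 * L (1,0) + w.2 * L (0,1) := by
  have hw : w = w.1 • ((1:ℝ),(0:ℝ)) + w.2 • ((0:ℝ),(1:ℝ)) := by
    ext <;> simp
  conv_lhs => rw [hw, map_add, map_smul, map_smul]
  rw [smul_eq_mul, smul_eq_mul]

lemma aux_pos (h : ℝ → ℝ) (d0 d1 : ℝ)
    (hd0 : HasDerivAt h d0 0) (hd1 : HasDerivAt h d1 1)
    (h0 : h 0 = 0) (h1 : h 1 = 0)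
    (hpos : ∀ t ∈ Ioo (0:ℝ) 1, 0 < h t) : 0 ≤ d0 ∧ d1 ≤ 0 := by
  constructor
  · have ht : Filter.Tendsto (slope h 0) (nhdsWithin 0 (Ioi 0 \ {0})) (nhds d0) := by
      have := (hd0.hasDerivWithinAt (s := Ioi 0))
      rwa [hasDerivWithinAt_iff_tendsto_slope] at this
    rw [Set.diff_singleton_eq_self (by simp)] at ht
    refine ge_of_tendsto ht ?_
    filter_upwards [mem_nhdsWithin_of_mem_nhds (Ioo_mem_nhds (by norm_num) (by norm_num) :
        Ioo (-1:ℝ) 1 ∈ nhds 0), self_mem_nhdsWithin] with t htI htS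
    have htpos : (0:ℝ) < t := htS
    have ht01 : t ∈ Ioo (0:ℝ) 1 := ⟨htpos, htI.2⟩
    have := hpos t ht01
    rw [slope_def_field]
    have : 0 < h t / t := div_pos (by simpa [h0] using this) htpos
    simpa [h0] using this.le
  · have ht : Filter.Tendsto (slope h 1) (nhdsWithin 1 (Iio 1 \ {1})) (nhds d1) := by
      have := (hd1.hasDerivWithinAt (s := Iio 1))
      rwa [hasDerivWithinAt_iff_tendsto_slope] at this
    rw [Set.diff_singleton_eq_self (by simp)] at ht
    refine le_of_tendsto ht ?_
    filter_upwards [mem_nhdsWithin_of_mem_nhds (Ioo_mem_nhds (by norm_num) (by norm_num) :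
        Ioo (0:ℝ) 2 ∈ nhds 1), self_mem_nhdsWithin] with t htI htS
    have htlt : t < 1 := htS
    have ht01 : t ∈ Ioo (0:ℝ) 1 := ⟨htI.1, htlt⟩
    have hht := hpos t ht01
    rw [slope_def_field]
    have : (h t - h 1) / (t - 1) ≤ 0 := by
      apply div_nonpos_of_nonneg_of_nonpos
      · simpa [h1] using hht.le
      · linarith [ht01.2]
    simpa [vsub_eq_sub] using this

lemma deriv_prod_neg (h : ℝ → ℝ) (hc : Continuous h) (d0 d1 : ℝ)
    (hd0 : HasDerivAt h d0 0) (hd1 : HasDerivAt h d1 1)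
    (h0 : h 0 = 0) (h1 : h 1 = 0)
    (hne : ∀ t ∈ Ioo (0:ℝ) 1, h t ≠ 0)
    (hd0' : d0 ≠ 0) (hd1' : d1 ≠ 0) : d0 * d1 < 0 := by
  have hsign : (∀ t ∈ Ioo (0:ℝ) 1, 0 < h t) ∨ (∀ t ∈ Ioo (0:ℝ) 1, h t < 0) := by
    have hmid : (1:ℝ)/2 ∈ Ioo (0:ℝ) 1 := by norm_num
    rcases lt_or_gt_of_ne (hne _ hmid) with hneg | hposm
    · right
      intro t ht
      by_contra hle
      push_neg at hle
      have htpos : 0 < h t := lt_of_le_of_ne hle (Ne.symm (hne t ht))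
      have hsub : uIcc t (1/2 : ℝ) ⊆ Ioo (0:ℝ) 1 :=
        (ordConnected_Ioo.uIcc_subset ht hmid)
      have : (0:ℝ) ∈ h '' uIcc t (1/2 : ℝ) := by
        apply intermediate_value_uIcc (hc.continuousOn)
        exact ⟨by simp [min_le_iff]; right; linarith, by simp [le_max_iff]; left; linarith⟩
      rcases this with ⟨s, hs, hs0⟩
      exact hne s (hsub hs) hs0
    · left
      intro t ht
      by_contra hle
      push_neg at hle
      have htneg : h t < 0 := lt_of_le_of_ne hle (hne t ht)
      have hsub : uIcc t (1/2 : ℝ) ⊆ Ioo (0:ℝ) 1 :=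
        (ordConnected_Ioo.uIcc_subset ht hmid)
      have : (0:ℝ) ∈ h '' uIcc t (1/2 : ℝ) := by
        apply intermediate_value_uIcc (hc.continuousOn)
        exact ⟨by simp [min_le_iff]; left; linarith, by simp [le_max_iff]; right; linarith⟩
      rcases this with ⟨s, hs, hs0⟩
      exact hne s (hsub hs) hs0
  rcases hsign with hp | hn
  · obtain ⟨hge, hle⟩ := aux_pos h d0 d1 hd0 hd1 h0 h1 hp
    exact mul_neg_of_pos_of_neg (lt_of_le_of_ne hge (Ne.symm hd0')) (lt_of_le_of_ne hle hd1')
  · obtain ⟨hge, hle⟩ := aux_pos (fun t => -h t) (-d0) (-d1) hd0.neg hd1.neg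
      (by simp [h0]) (by simp [h1]) (fun t ht => by simpa using hn t ht)
    have h0' : d0 < 0 := by
      have : d0 ≤ 0 := by linarith
      exact lt_of_le_of_ne this hd0'
    have h1' : 0 < d1 := by
      have : 0 ≤ d1 := by linarith
      exact lt_of_le_of_ne this (Ne.symm hd1')
    exact mul_neg_of_neg_of_pos h0' h1'

/-- Theorem 3.1 (C¹ transversal form): the sign of the Jacobian determinant
alternates at consecutive equilibria along the f-isocline. -/
theorem index_alternation
    (f g : ℝ × ℝ → ℝ) (hf : ContDiff ℝ 1 f) (hg : ContDiff ℝ 1 g)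
    (γ : ℝ → ℝ × ℝ) (hγ : ContDiff ℝ 1 γ)
    (hpos : ∀ t ∈ Icc (0:ℝ) 1, 0 < (γ t).1 ∧ 0 < (γ t).2)
    (hγ' : ∀ t ∈ Icc (0:ℝ) 1, deriv γ t ≠ 0)
    (hgrad : ∀ t ∈ Icc (0:ℝ) 1, fderiv ℝ f (γ t) ≠ 0)
    (hiso : ∀ t ∈ Icc (0:ℝ) 1, f (γ t) = 0)
    (hg0 : g (γ 0) = 0) (hg1 : g (γ 1) = 0)
    (hgne : ∀ t ∈ Ioo (0:ℝ) 1, g (γ t) ≠ 0)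
    (htrans0 : deriv (fun t => g (γ t)) 0 ≠ 0)
    (htrans1 : deriv (fun t => g (γ t)) 1 ≠ 0) :
    Dfun f g (γ 0) * Dfun f g (γ 1) < 0 := by
  -- notation
  set a : ℝ → ℝ := fun t => pdx f (γ t) with ha
  set b : ℝ → ℝ := fun t => pdy f (γ t) with hb
  set u : ℝ → ℝ := fun t => (deriv γ t).1 with hu
  set v : ℝ → ℝ := fun t => (deriv γ t).2 with hv
  have hγdiff : Differentiable ℝ γ := hγ.differentiable one_ne_zero
  -- chain rule for g ∘ γ
  have hgchain : ∀ t : ℝ, HasDerivAt (fun s => g (γ s))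
      (pdx g (γ t) * u t + pdy g (γ t) * v t) t := by
    intro t
    have h1 : HasDerivAt γ (deriv γ t) t := (hγdiff t).hasDerivAt
    have h2 : HasFDerivAt g (fderiv ℝ g (γ t)) (γ t) :=
      (hg.differentiable one_ne_zero (γ t)).hasFDerivAt
    have h3 := h2.comp_hasDerivAt t h1
    have h4 : fderiv ℝ g (γ t) (deriv γ t)
        = pdx g (γ t) * u t + pdy g (γ t) * v t := by
      rw [eval_clm]
      simp [pdx, pdy, hu, hv]
      ring
    rwa [h4] at h3
  -- orthogonality: a u + b v = 0 on [0,1]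
  have horth : ∀ t ∈ Icc (0:ℝ) 1, a t * u t + b t * v t = 0 := by
    intro t ht
    have h1 : HasDerivAt γ (deriv γ t) t := (hγdiff t).hasDerivAt
    have h2 : HasFDerivAt f (fderiv ℝ f (γ t)) (γ t) :=
      (hf.differentiable one_ne_zero (γ t)).hasFDerivAt
    have h3 : HasDerivWithinAt (fun s => f (γ s)) (fderiv ℝ f (γ t) (deriv γ t))
        (Icc 0 1) t := (h2.comp_hasDerivAt t h1).hasDerivWithinAt
    have h0 : HasDerivWithinAt (fun s => f (γ s)) 0 (Icc 0 1) t :=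
      (hasDerivWithinAt_const t (Icc (0:ℝ) 1) (0:ℝ)).congr
        (fun s hs => hiso s hs) (hiso t ht)
    have huniq : UniqueDiffWithinAt ℝ (Icc (0:ℝ) 1) t :=
      uniqueDiffOn_Icc zero_lt_one t ht
    have heq : fderiv ℝ f (γ t) (deriv γ t) = 0 := by
      rw [← h3.derivWithin huniq, h0.derivWithin huniq]
    rw [eval_clm] at heq
    have : (deriv γ t).1 * a t + (deriv γ t).2 * b t = 0 := heq
    simp only [ha, hb, hu, hv] at *
    linarith
  -- gradient nonzero : a² + b² > 0
  have habpos : ∀ t ∈ Icc (0:ℝ) 1, 0 < a t ^ 2 + b t ^ 2 := by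
    intro t ht
    rcases (hgrad t ht) with hL
    by_contra hc
    push_neg at hc
    have ha0 : a t = 0 ∧ b t = 0 := by constructor <;> nlinarith [sq_nonneg (a t), sq_nonneg (b t)]
    refine hL (ContinuousLinearMap.ext fun w => ?_)
    rw [ContinuousLinearMap.zero_apply, eval_clm]
    have h1 : fderiv ℝ f (γ t) (1,0) = 0 := ha0.1
    have h2 : fderiv ℝ f (γ t) (0,1) = 0 := ha0.2
    simp [h1, h2]
  -- the scalar c
  set c : ℝ → ℝ := fun t => (a t * v t - b t * u t) / (a t ^ 2 + b t ^ 2) with hc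
  have hrep : ∀ t ∈ Icc (0:ℝ) 1, u t = -(c t) * b t ∧ v t = c t * a t := by
    intro t ht
    have hd := (habpos t ht).ne'
    constructor
    · rw [hc]
      field_simp
      linear_combination (a t) * horth t ht
    · rw [hc]
      field_simp
      linear_combination (b t) * horth t ht
  have hcne : ∀ t ∈ Icc (0:ℝ) 1, c t ≠ 0 := by
    intro t ht hc0
    obtain ⟨h1, h2⟩ := hrep t ht
    rw [hc0] at h1 h2
    apply hγ' t ht
    have : deriv γ t = (u t, v t) := rfl
    rw [this, h1, h2]
    norm_num
  -- continuity of c on [0,1]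
  have hfd : Continuous fun t => fderiv ℝ f (γ t) :=
    (hf.continuous_fderiv one_ne_zero).comp hγ.continuous
  have hca : Continuous a := hfd.clm_apply continuous_const
  have hcb : Continuous b := hfd.clm_apply continuous_const
  have hderivγ : Continuous (deriv γ) := hγ.continuous_deriv le_rfl
  have hcu : Continuous u := (continuous_fst).comp hderivγ
  have hcv : Continuous v := (continuous_snd).comp hderivγ
  have hcc : ContinuousOn c (Icc 0 1) := by
    apply ContinuousOn.div
    · exact ((hca.mul hcv).sub (hcb.mul hcu)).continuousOn
    · exact ((hca.pow 2).add (hcb.pow 2)).continuousOn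
    · exact fun t ht => (habpos t ht).ne'
  -- c has constant sign
  have hc01 : 0 < c 0 * c 1 := by
    have h0m : (0:ℝ) ∈ Icc (0:ℝ) 1 := by norm_num
    have h1m : (1:ℝ) ∈ Icc (0:ℝ) 1 := by norm_num
    rcases lt_trichotomy (c 0 * c 1) 0 with hlt | heq | hgt
    · exfalso
      have : (0:ℝ) ∈ uIcc (c 0) (c 1) := by
        rcases mul_neg_iff.mp hlt with ⟨hp, hn⟩ | ⟨hn, hp⟩
        · exact ⟨by simp [min_le_iff]; right; linarith, by simp [le_max_iff]; left; linarith⟩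
        · exact ⟨by simp [min_le_iff]; left; linarith, by simp [le_max_iff]; right; linarith⟩
      have hIcc : uIcc (0:ℝ) 1 = Icc (0:ℝ) 1 := uIcc_of_le zero_le_one
      have := intermediate_value_uIcc (f := c) (a := (0:ℝ)) (b := 1) (by rw [hIcc]; exact hcc) this
      rcases this with ⟨s, hs, hs0⟩
      exact hcne s (hIcc ▸ hs) hs0
    · exfalso
      rcases mul_eq_zero.mp heq with h | h
      exacts [hcne 0 h0m h, hcne 1 h1m h]
    · exact hgt
  -- derivative of g ∘ γ at endpoints equals c t * Dfun
  have hkey : ∀ t ∈ Icc (0:ℝ) 1, deriv (fun s => g (γ s)) t = c t * Dfun f g (γ t) := by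
    intro t ht
    rw [(hgchain t).deriv]
    obtain ⟨h1, h2⟩ := hrep t ht
    rw [h1, h2]
    simp [Dfun]
    ring
  have h0m : (0:ℝ) ∈ Icc (0:ℝ) 1 := by norm_num
  have h1m : (1:ℝ) ∈ Icc (0:ℝ) 1 := by norm_num
  -- the endpoint derivative product is negative
  have hprod : deriv (fun s => g (γ s)) 0 * deriv (fun s => g (γ s)) 1 < 0 := by
    apply deriv_prod_neg (fun s => g (γ s)) (hg.continuous.comp hγ.continuous) _ _
      ((hgchain 0).deriv ▸ hgchain 0) ((hgchain 1).deriv ▸ hgchain 1)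
      hg0 hg1 hgne htrans0 htrans1
  rw [hkey 0 h0m, hkey 1 h1m] at hprod
  nlinarith [hc01, hprod]
end

section
/- Let f, g : ℝ² → ℝ be C¹ with ∂f/∂x > 0 and ∂g/∂y > 0 everywhere on the open positive quadrant (intraspecific cooperation for both species). Let γ : [0,1] → (0,∞)×(0,∞) be a C¹ curve with γ'(t) ≠ 0 and ∇f(γ(t)) ≠ 0 and f(γ(t)) = 0 for all t, with g(γ(0)) = g(γ(1)) = 0, g(γ(t)) ≠ 0 on (0,1), and nonzero derivatives of t ↦ g(γ(t)) at t = 0 and t = 1. Then exactly one of the two equilibria γ(0), γ(1) is a repulsive node (all eigenvalues of its Jacobian have positive real part) and the other is a saddle point (its Jacobian has real eigenvalues of opposite sign): repulsive nodes and saddle points alternate along the isoclines (Corollary 3.3). -/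
open Set Polynomial

/-- The Jacobian of the system ẋ = x f(x,y), ẏ = y g(x,y) at an equilibrium p. -/
noncomputable def jac (f g : ℝ × ℝ → ℝ) (p : ℝ × ℝ) : Matrix (Fin 2) (Fin 2) ℝ :=
  !![p.1 * pdx f p, p.1 * pdy f p; p.2 * pdx g p, p.2 * pdy g p]

/-- A repulsive node: all eigenvalues of the Jacobian have positive real part. -/
def IsRepulsiveNode (f g : ℝ × ℝ → ℝ) (p : ℝ × ℝ) : Prop :=
  ∀ μ : ℂ, (((jac f g p).map Complex.ofReal).charpoly).IsRoot μ → μ.re > 0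

/-- A saddle point: the Jacobian has two real eigenvalues of opposite sign. -/
def IsSaddlePoint (f g : ℝ × ℝ → ℝ) (p : ℝ × ℝ) : Prop :=
  ∃ l₁ l₂ : ℝ, l₁ < 0 ∧ 0 < l₂ ∧
    ((jac f g p).charpoly).IsRoot l₁ ∧ ((jac f g p).charpoly).IsRoot l₂

open Filter Topology

lemma isRoot_charpoly_fin_two {R : Type*} [CommRing R] (M : Matrix (Fin 2) (Fin 2) R) (μ : R) :
    M.charpoly.IsRoot μ ↔ (μ - M 0 0) * (μ - M 1 1) - M 0 1 * M 1 0 = 0 := by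
  rw [Matrix.charpoly, Matrix.det_fin_two, Matrix.charmatrix_apply_eq,
    Matrix.charmatrix_apply_eq, Matrix.charmatrix_apply_ne _ _ _ (by decide),
    Matrix.charmatrix_apply_ne _ _ _ (by decide)]
  simp [Polynomial.IsRoot]

lemma saddle_aux (A B C D : ℝ) (h : A * D - B * C < 0) :
    ∃ l₁ l₂ : ℝ, l₁ < 0 ∧ 0 < l₂ ∧
      ((!![A, B; C, D] : Matrix (Fin 2) (Fin 2) ℝ).charpoly).IsRoot l₁ ∧
      ((!![A, B; C, D] : Matrix (Fin 2) (Fin 2) ℝ).charpoly).IsRoot l₂ := by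
  have e00 : (!![A, B; C, D] : Matrix (Fin 2) (Fin 2) ℝ) 0 0 = A := rfl
  have e01 : (!![A, B; C, D] : Matrix (Fin 2) (Fin 2) ℝ) 0 1 = B := rfl
  have e10 : (!![A, B; C, D] : Matrix (Fin 2) (Fin 2) ℝ) 1 0 = C := rfl
  have e11 : (!![A, B; C, D] : Matrix (Fin 2) (Fin 2) ℝ) 1 1 = D := rfl
  set T := A + D with hT
  have hd : 0 ≤ T ^ 2 - 4 * (A * D - B * C) := by nlinarith [sq_nonneg T]
  set s := Real.sqrt (T ^ 2 - 4 * (A * D - B * C)) with hs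
  have hs2 : s ^ 2 = T ^ 2 - 4 * (A * D - B * C) := Real.sq_sqrt hd
  have hs0 : 0 ≤ s := Real.sqrt_nonneg _
  refine ⟨(T - s) / 2, (T + s) / 2, ?_, ?_, ?_, ?_⟩
  · nlinarith [sq_nonneg (s - T), sq_nonneg (s + T)]
  · nlinarith [sq_nonneg (s - T), sq_nonneg (s + T)]
  · rw [isRoot_charpoly_fin_two, e00, e01, e10, e11]
    linear_combination hs2 / 4
  · rw [isRoot_charpoly_fin_two, e00, e01, e10, e11]
    linear_combination hs2 / 4

lemma repulsive_aux (A B C D : ℝ) (htr : 0 < A + D) (hdet : 0 < A * D - B * C) :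
    ∀ μ : ℂ, (((!![A, B; C, D] : Matrix (Fin 2) (Fin 2) ℝ).map Complex.ofReal).charpoly).IsRoot μ →
      μ.re > 0 := by
  intro μ hμ
  rw [isRoot_charpoly_fin_two] at hμ
  have e00 : ((!![A, B; C, D] : Matrix (Fin 2) (Fin 2) ℝ).map Complex.ofReal) 0 0 = (A : ℂ) := rfl
  have e01 : ((!![A, B; C, D] : Matrix (Fin 2) (Fin 2) ℝ).map Complex.ofReal) 0 1 = (B : ℂ) := rfl
  have e10 : ((!![A, B; C, D] : Matrix (Fin 2) (Fin 2) ℝ).map Complex.ofReal) 1 0 = (C : ℂ) := rfl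
  have e11 : ((!![A, B; C, D] : Matrix (Fin 2) (Fin 2) ℝ).map Complex.ofReal) 1 1 = (D : ℂ) := rfl
  rw [e00, e01, e10, e11] at hμ
  have hre := congrArg Complex.re hμ
  have him := congrArg Complex.im hμ
  simp only [Complex.sub_re, Complex.sub_im, Complex.mul_re, Complex.mul_im,
    Complex.ofReal_re, Complex.ofReal_im, Complex.zero_re, Complex.zero_im] at hre him
  by_cases hy : μ.im = 0
  · rw [hy] at hre
    by_contra hx
    push_neg at hx
    nlinarith [sq_nonneg μ.re, mul_nonneg (neg_nonneg.mpr hx) htr.le]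
  · have h2 : μ.im * (2 * μ.re - (A + D)) = 0 := by linear_combination him
    have := (mul_eq_zero.mp h2).resolve_left hy
    linarith

lemma same_sign_of_continuousOn {h : ℝ → ℝ} {a b : ℝ}
    (hc : ContinuousOn h (uIcc a b)) (hne : ∀ t ∈ uIcc a b, h t ≠ 0) :
    0 < h a * h b := by
  rcases lt_or_ge 0 (h a * h b) with h' | h'
  · exact h'
  exfalso
  have hne0 : h a * h b ≠ 0 := mul_ne_zero (hne a left_mem_uIcc) (hne b right_mem_uIcc)
  have hlt : h a * h b < 0 := lt_of_le_of_ne h' hne0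
  have hmem : (0 : ℝ) ∈ uIcc (h a) (h b) := by
    rcases mul_neg_iff.mp hlt with ⟨h1, h2⟩ | ⟨h1, h2⟩
    · exact mem_uIcc.mpr (Or.inr ⟨h2.le, h1.le⟩)
    · exact mem_uIcc.mpr (Or.inl ⟨h1.le, h2.le⟩)
  obtain ⟨t, ht, h0⟩ := intermediate_value_uIcc hc hmem
  exact hne t ht h0

lemma slope_sign {h : ℝ → ℝ} {a d : ℝ} (hd : HasDerivAt h d a) (h0 : h a = 0) (hne : d ≠ 0) :
    ∀ᶠ t in 𝓝[≠] a, 0 < d * (h t / (t - a)) := by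
  have ht := hasDerivAt_iff_tendsto_slope.mp hd
  have hmem : {x : ℝ | 0 < d * x} ∈ 𝓝 d := by
    have hcont : Continuous fun x : ℝ => d * x := continuous_const.mul continuous_id
    have h2 : (0 : ℝ) < d * d := mul_self_pos.mpr hne
    exact hcont.continuousAt.preimage_mem_nhds (Ioi_mem_nhds h2)
  filter_upwards [ht.eventually hmem] with t ht'
  have : slope h a t = h t / (t - a) := by rw [slope_def_field, h0, sub_zero]
  rw [← this]
  exact ht'


set_option maxHeartbeats 1000000 in
/-- Corollary 3.3: under intraspecific cooperation for both species, repulsive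
nodes and saddle points alternate along the isoclines. -/
theorem repulsive_saddle_alternation
    (f g : ℝ × ℝ → ℝ) (hf : ContDiff ℝ 1 f) (hg : ContDiff ℝ 1 g)
    (hcomp : ∀ p : ℝ × ℝ, 0 < p.1 → 0 < p.2 → pdx f p > 0 ∧ pdy g p > 0)
    (γ : ℝ → ℝ × ℝ) (hγ : ContDiff ℝ 1 γ)
    (hpos : ∀ t ∈ Icc (0:ℝ) 1, 0 < (γ t).1 ∧ 0 < (γ t).2)
    (hγ' : ∀ t ∈ Icc (0:ℝ) 1, deriv γ t ≠ 0)
    (hgrad : ∀ t ∈ Icc (0:ℝ) 1, fderiv ℝ f (γ t) ≠ 0)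
    (hiso : ∀ t ∈ Icc (0:ℝ) 1, f (γ t) = 0)
    (hg0 : g (γ 0) = 0) (hg1 : g (γ 1) = 0)
    (hgne : ∀ t ∈ Ioo (0:ℝ) 1, g (γ t) ≠ 0)
    (htrans0 : deriv (fun t => g (γ t)) 0 ≠ 0)
    (htrans1 : deriv (fun t => g (γ t)) 1 ≠ 0) :
    (IsRepulsiveNode f g (γ 0) ∧ IsSaddlePoint f g (γ 1)) ∨
    (IsSaddlePoint f g (γ 0) ∧ IsRepulsiveNode f g (γ 1)) := by
  have hfd : Differentiable ℝ f := hf.differentiable one_ne_zero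
  have hgd : Differentiable ℝ g := hg.differentiable one_ne_zero
  have hγd : Differentiable ℝ γ := hγ.differentiable one_ne_zero
  have h01 : (0:ℝ) ∈ Icc (0:ℝ) 1 := ⟨le_refl 0, zero_le_one⟩
  have h11 : (1:ℝ) ∈ Icc (0:ℝ) 1 := ⟨zero_le_one, le_refl 1⟩
  have hexp : ∀ (φ : ℝ × ℝ →L[ℝ] ℝ) (w : ℝ × ℝ), φ w = w.1 * φ (1, 0) + w.2 * φ (0, 1) := by
    intro φ w
    have hw : w = w.1 • ((1:ℝ), (0:ℝ)) + w.2 • ((0:ℝ), (1:ℝ)) := by ext <;> simp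
    calc φ w = φ (w.1 • ((1:ℝ), (0:ℝ)) + w.2 • ((0:ℝ), (1:ℝ))) := by rw [← hw]
    _ = w.1 * φ (1, 0) + w.2 * φ (0, 1) := by
        rw [map_add, map_smul, map_smul]; simp [smul_eq_mul]
  have hderf : ∀ t : ℝ, HasDerivAt (fun s => f (γ s)) (fderiv ℝ f (γ t) (deriv γ t)) t :=
    fun t => (hfd (γ t)).hasFDerivAt.comp_hasDerivAt t (hγd t).hasDerivAt
  have hderg : ∀ t : ℝ, HasDerivAt (fun s => g (γ s)) (fderiv ℝ g (γ t) (deriv γ t)) t :=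
    fun t => (hgd (γ t)).hasFDerivAt.comp_hasDerivAt t (hγd t).hasDerivAt
  -- derivative of f ∘ γ vanishes on [0,1]
  have hF0 : ∀ t ∈ Icc (0:ℝ) 1, fderiv ℝ f (γ t) (deriv γ t) = 0 := by
    intro t ht
    have hu : UniqueDiffWithinAt ℝ (Icc (0:ℝ) 1) t := (uniqueDiffOn_Icc zero_lt_one) t ht
    have h1 : HasDerivWithinAt (fun s => f (γ s)) (fderiv ℝ f (γ t) (deriv γ t)) (Icc 0 1) t :=
      (hderf t).hasDerivWithinAt
    have h2 : HasDerivWithinAt (fun _ : ℝ => (0:ℝ)) (fderiv ℝ f (γ t) (deriv γ t)) (Icc 0 1) t :=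
      h1.congr (fun y hy => (hiso y hy).symm) ((hiso t ht).symm)
    have e1 := h2.derivWithin hu
    have e2 := (hasDerivWithinAt_const (c := (0:ℝ)) (s := Icc (0:ℝ) 1) (x := t)).derivWithin hu
    rw [e2] at e1
    exact e1.symm
  have hF1 : ∀ t ∈ Icc (0:ℝ) 1,
      pdx f (γ t) * (deriv γ t).1 + pdy f (γ t) * (deriv γ t).2 = 0 := by
    intro t ht
    have h := hF0 t ht
    rw [hexp (fderiv ℝ f (γ t)) (deriv γ t)] at h
    simp only [pdx, pdy]
    linear_combination h
  have hvne : ∀ t ∈ Icc (0:ℝ) 1, (deriv γ t).2 ≠ 0 := by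
    intro t ht h2
    have ha := (hcomp (γ t) (hpos t ht).1 (hpos t ht).2).1
    have h1 : pdx f (γ t) * (deriv γ t).1 = 0 := by
      have h3 := hF1 t ht; rw [h2] at h3; linarith
    have hv1 : (deriv γ t).1 = 0 := (mul_eq_zero.mp h1).resolve_left (ne_of_gt ha)
    apply hγ' t ht
    have h4 : deriv γ t = ((deriv γ t).1, (deriv γ t).2) := rfl
    rw [h4, hv1, h2]
    rfl
  -- constant sign of the second component of deriv γ
  have hvc : Continuous fun t => (deriv γ t).2 := (hγ.continuous_deriv le_rfl).snd
  have hvv : 0 < (deriv γ 0).2 * (deriv γ 1).2 := by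
    apply same_sign_of_continuousOn (h := fun t => (deriv γ t).2) hvc.continuousOn
    intro t ht
    rw [uIcc_of_le zero_le_one] at ht
    exact hvne t ht
  -- derivatives of g ∘ γ at the endpoints
  have hd0 : deriv (fun t => g (γ t)) 0 = fderiv ℝ g (γ 0) (deriv γ 0) := (hderg 0).deriv
  have hd1 : deriv (fun t => g (γ t)) 1 = fderiv ℝ g (γ 1) (deriv γ 1) := (hderg 1).deriv
  have hdh0ne : fderiv ℝ g (γ 0) (deriv γ 0) ≠ 0 := by rw [← hd0]; exact htrans0
  have hdh1ne : fderiv ℝ g (γ 1) (deriv γ 1) ≠ 0 := by rw [← hd1]; exact htrans1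
  -- pick points near each endpoint where the sign of g ∘ γ matches the slope
  have hmono0 : 𝓝[>] (0:ℝ) ≤ 𝓝[≠] (0:ℝ) := nhdsWithin_mono _ (fun x hx => ne_of_gt hx)
  have hmono1 : 𝓝[<] (1:ℝ) ≤ 𝓝[≠] (1:ℝ) := nhdsWithin_mono _ (fun x hx => ne_of_lt hx)
  have hev0 := (slope_sign (hderg 0) hg0 hdh0ne).filter_mono hmono0
  have hev1 := (slope_sign (hderg 1) hg1 hdh1ne).filter_mono hmono1
  obtain ⟨t₀, ht₀s, ht₀m⟩ := (hev0.and
    (eventually_of_mem (Ioo_mem_nhdsGT_of_mem ⟨le_refl 0, zero_lt_one⟩)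
      (fun x hx => hx))).exists
  obtain ⟨t₁, ht₁s, ht₁m⟩ := (hev1.and
    (eventually_of_mem (Ioo_mem_nhdsLT_of_mem ⟨zero_lt_one, le_refl 1⟩)
      (fun x hx => hx))).exists
  have s0 : 0 < fderiv ℝ g (γ 0) (deriv γ 0) * g (γ t₀) := by
    have ht0 : (0:ℝ) < t₀ := ht₀m.1
    have hkey : fderiv ℝ g (γ 0) (deriv γ 0) * (g (γ t₀) / (t₀ - 0)) * t₀
        = fderiv ℝ g (γ 0) (deriv γ 0) * g (γ t₀) := by
      rw [sub_zero]; field_simp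
    rw [← hkey]
    exact mul_pos ht₀s ht0
  have s1 : fderiv ℝ g (γ 1) (deriv γ 1) * g (γ t₁) < 0 := by
    have ht1 : t₁ - 1 < 0 := sub_neg.mpr ht₁m.2
    have htne : t₁ - 1 ≠ 0 := ne_of_lt ht1
    have hkey : fderiv ℝ g (γ 1) (deriv γ 1) * (g (γ t₁) / (t₁ - 1)) * (t₁ - 1)
        = fderiv ℝ g (γ 1) (deriv γ 1) * g (γ t₁) := by
      field_simp
    rw [← hkey]
    exact mul_neg_of_pos_of_neg ht₁s ht1
  -- g ∘ γ has constant sign in the interior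
  have hmid : 0 < g (γ t₀) * g (γ t₁) := by
    apply same_sign_of_continuousOn (h := fun t => g (γ t))
      ((hg.continuous.comp hγ.continuous).continuousOn)
    intro t ht
    have hsub : uIcc t₀ t₁ ⊆ Ioo (0:ℝ) 1 := (ordConnected_Ioo).uIcc_subset ht₀m ht₁m
    exact hgne t (hsub ht)
  -- the endpoint derivatives of g ∘ γ have opposite signs
  have hdd : fderiv ℝ g (γ 0) (deriv γ 0) * fderiv ℝ g (γ 1) (deriv γ 1) < 0 := by
    by_contra hn
    push_neg at hn
    have P : fderiv ℝ g (γ 0) (deriv γ 0) * g (γ t₀) *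
        (fderiv ℝ g (γ 1) (deriv γ 1) * g (γ t₁)) < 0 := mul_neg_of_pos_of_neg s0 s1
    have Q : 0 ≤ fderiv ℝ g (γ 0) (deriv γ 0) * fderiv ℝ g (γ 1) (deriv γ 1) *
        (g (γ t₀) * g (γ t₁)) := mul_nonneg hn hmid.le
    nlinarith [P, Q]
  -- express the endpoint derivatives via pdx/pdy
  have hdh0e : fderiv ℝ g (γ 0) (deriv γ 0)
      = pdx g (γ 0) * (deriv γ 0).1 + pdy g (γ 0) * (deriv γ 0).2 := by
    rw [hexp (fderiv ℝ g (γ 0)) (deriv γ 0)]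
    simp only [pdx, pdy]; ring
  have hdh1e : fderiv ℝ g (γ 1) (deriv γ 1)
      = pdx g (γ 1) * (deriv γ 1).1 + pdy g (γ 1) * (deriv γ 1).2 := by
    rw [hexp (fderiv ℝ g (γ 1)) (deriv γ 1)]
    simp only [pdx, pdy]; ring
  have rel0 : pdx f (γ 0) * fderiv ℝ g (γ 0) (deriv γ 0)
      = (pdx f (γ 0) * pdy g (γ 0) - pdy f (γ 0) * pdx g (γ 0)) * (deriv γ 0).2 := by
    rw [hdh0e]
    linear_combination (pdx g (γ 0)) * (hF1 0 h01)
  have rel1 : pdx f (γ 1) * fderiv ℝ g (γ 1) (deriv γ 1)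
      = (pdx f (γ 1) * pdy g (γ 1) - pdy f (γ 1) * pdx g (γ 1)) * (deriv γ 1).2 := by
    rw [hdh1e]
    linear_combination (pdx g (γ 1)) * (hF1 1 h11)
  have ha0 := (hcomp (γ 0) (hpos 0 h01).1 (hpos 0 h01).2).1
  have hd0' := (hcomp (γ 0) (hpos 0 h01).1 (hpos 0 h01).2).2
  have ha1 := (hcomp (γ 1) (hpos 1 h11).1 (hpos 1 h11).2).1
  have hd1' := (hcomp (γ 1) (hpos 1 h11).1 (hpos 1 h11).2).2
  -- the isocline determinants have opposite signs
  have hDD : (pdx f (γ 0) * pdy g (γ 0) - pdy f (γ 0) * pdx g (γ 0)) *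
      (pdx f (γ 1) * pdy g (γ 1) - pdy f (γ 1) * pdx g (γ 1)) < 0 := by
    have e : (pdx f (γ 0) * pdx f (γ 1)) *
        (fderiv ℝ g (γ 0) (deriv γ 0) * fderiv ℝ g (γ 1) (deriv γ 1))
        = (pdx f (γ 0) * pdy g (γ 0) - pdy f (γ 0) * pdx g (γ 0)) *
          (pdx f (γ 1) * pdy g (γ 1) - pdy f (γ 1) * pdx g (γ 1)) *
          ((deriv γ 0).2 * (deriv γ 1).2) := by
      linear_combination (pdx f (γ 1) * fderiv ℝ g (γ 1) (deriv γ 1)) * rel0 +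
        ((pdx f (γ 0) * pdy g (γ 0) - pdy f (γ 0) * pdx g (γ 0)) * (deriv γ 0).2) * rel1
    have hlt : (pdx f (γ 0) * pdx f (γ 1)) *
        (fderiv ℝ g (γ 0) (deriv γ 0) * fderiv ℝ g (γ 1) (deriv γ 1)) < 0 :=
      mul_neg_of_pos_of_neg (mul_pos ha0 ha1) hdd
    rw [e] at hlt
    by_contra hn
    push_neg at hn
    exact absurd hlt (not_lt.mpr (mul_nonneg hn hvv.le))
  have hx0 := (hpos 0 h01).1
  have hy0 := (hpos 0 h01).2
  have hx1 := (hpos 1 h11).1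
  have hy1 := (hpos 1 h11).2
  rcases lt_trichotomy (pdx f (γ 0) * pdy g (γ 0) - pdy f (γ 0) * pdx g (γ 0)) 0 with hD0 | hD0 | hD0
  · -- D0 < 0 : saddle at γ 0, repulsive at γ 1
    have hD1 : 0 < pdx f (γ 1) * pdy g (γ 1) - pdy f (γ 1) * pdx g (γ 1) := by nlinarith
    right
    constructor
    · unfold IsSaddlePoint jac
      apply saddle_aux
      nlinarith [mul_neg_of_pos_of_neg (mul_pos hx0 hy0) hD0]
    · unfold IsRepulsiveNode jac
      apply repulsive_aux
      · exact add_pos (mul_pos hx1 ha1) (mul_pos hy1 hd1')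
      · nlinarith [mul_pos (mul_pos hx1 hy1) hD1]
  · rw [hD0] at hDD
    simp at hDD
  · -- D0 > 0 : repulsive at γ 0, saddle at γ 1
    have hD1 : pdx f (γ 1) * pdy g (γ 1) - pdy f (γ 1) * pdx g (γ 1) < 0 := by nlinarith
    left
    constructor
    · unfold IsRepulsiveNode jac
      apply repulsive_aux
      · exact add_pos (mul_pos hx0 ha0) (mul_pos hy0 hd0')
      · nlinarith [mul_pos (mul_pos hx0 hy0) hD0]
    · unfold IsSaddlePoint jac
      apply saddle_aux
      nlinarith [mul_neg_of_pos_of_neg (mul_pos hx1 hy1) hD1]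
end

section
/- Let f, g : ℝ² → ℝ be C¹ and let U ⊆ (0,∞)×(0,∞) be a convex open set on which ∂f/∂y > 0, ∂g/∂x > 0 (strict mutualism), ∂f/∂x > 0 and ∂g/∂y > 0 (the sign configuration near a repulsive strictly mutualistic equilibrium). Then the system ẋ = x·f(x,y), ẏ = y·g(x,y) admits no nonconstant periodic solution whose image is contained in U; in particular, no limit cycle surrounding a repulsive strictly mutualistic equilibrium can lie in U (Theorem 4.1). -/
open Set

lemma fderiv_apply_pdx_pdy (f : ℝ × ℝ → ℝ) (p v : ℝ × ℝ) :
    fderiv ℝ f p v = v.1 * pdx f p + v.2 * pdy f p := by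
  have hv : v = v.1 • ((1:ℝ), (0:ℝ)) + v.2 • ((0:ℝ), (1:ℝ)) := by ext <;> simp
  rw [hv, map_add, map_smul, map_smul]
  simp [pdx, pdy, smul_eq_mul]

lemma strict_mono_aux (f : ℝ × ℝ → ℝ) (hf : ContDiff ℝ 1 f) (U : Set (ℝ × ℝ))
    (hUconv : Convex ℝ U) (hfx : ∀ p ∈ U, pdx f p > 0) (hfy : ∀ p ∈ U, pdy f p > 0)
    {p q : ℝ × ℝ} (hp : p ∈ U) (hq : q ∈ U) (h1 : p.1 ≤ q.1) (h2 : p.2 ≤ q.2)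
    (hne : p ≠ q) : f p < f q := by
  set c : ℝ → ℝ × ℝ := fun s => p + s • (q - p) with hc
  have hcd : ∀ s : ℝ, HasDerivAt c (q - p) s := by
    intro s
    have : HasDerivAt (fun s : ℝ => s • (q - p)) ((1:ℝ) • (q - p)) s :=
      (hasDerivAt_id s).smul_const (q - p)
    simpa only [one_smul] using this.const_add p
  have hdf : ∀ s : ℝ, HasDerivAt (fun s => f (c s))
      ((q.1 - p.1) * pdx f (c s) + (q.2 - p.2) * pdy f (c s)) s := by
    intro s
    have hfd : HasFDerivAt f (fderiv ℝ f (c s)) (c s) :=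
      (hf.differentiable one_ne_zero (c s)).hasFDerivAt
    have := hfd.comp_hasDerivAt s (hcd s)
    rwa [fderiv_apply_pdx_pdy] at this
  have hmem : ∀ s ∈ Icc (0:ℝ) 1, c s ∈ U := fun s hs =>
    hUconv.add_smul_sub_mem hp hq hs
  have hmono : StrictMonoOn (fun s => f (c s)) (Icc (0:ℝ) 1) := by
    apply strictMonoOn_of_deriv_pos (convex_Icc 0 1)
    · exact (Continuous.continuousOn (by
        have : Differentiable ℝ (fun s => f (c s)) := fun s => (hdf s).differentiableAt
        exact this.continuous))
    · intro s hs
      rw [interior_Icc] at hs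
      rw [(hdf s).deriv]
      have hcu : c s ∈ U := hmem s (Ioo_subset_Icc_self hs)
      have hx := hfx _ hcu
      have hy := hfy _ hcu
      have hd1 : 0 ≤ q.1 - p.1 := by linarith
      have hd2 : 0 ≤ q.2 - p.2 := by linarith
      have : q.1 - p.1 > 0 ∨ q.2 - p.2 > 0 := by
        rcases eq_or_lt_of_le h1 with h | h
        · rcases eq_or_lt_of_le h2 with h' | h'
          · exact absurd (Prod.ext h h') hne
          · right; linarith
        · left; linarith
      rcases this with h | h
      · nlinarith
      · nlinarith
  have := hmono (left_mem_Icc.2 zero_le_one) (right_mem_Icc.2 zero_le_one) zero_lt_one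
  simpa [hc] using this

/-- If x has derivative D everywhere, D t0 = 0, and D has positive derivative at t0,
then t0 is not a global max of x. -/
lemma aux_slope {x D : ℝ → ℝ} (hx : ∀ t, HasDerivAt x (D t) t) {t0 c : ℝ}
    (hc : HasDerivAt D c t0) (h0 : D t0 = 0) (hcpos : 0 < c)
    (hmax : ∀ t, x t ≤ x t0) : False := by
  rw [hasDerivAt_iff_tendsto_slope] at hc
  have hev : ∀ᶠ t in nhdsWithin t0 {t0}ᶜ, 0 < slope D t0 t :=
    hc.eventually (eventually_gt_nhds hcpos)
  have hev' : ∀ᶠ t in nhdsWithin t0 (Ioi t0), 0 < D t := by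
    have hsub : Ioi t0 ⊆ {t0}ᶜ := fun t ht => ne_of_gt ht
    filter_upwards [nhdsWithin_mono t0 hsub hev, self_mem_nhdsWithin] with t ht ht'
    rw [slope_def_field] at ht
    have htpos : 0 < t - t0 := sub_pos.2 ht'
    rw [h0, sub_zero] at ht
    have := mul_pos ht htpos
    rw [div_mul_cancel₀] at this
    · exact this
    · exact ne_of_gt htpos
  rw [eventually_nhdsWithin_iff] at hev'
  rcases mem_nhds_iff.1 hev' with ⟨s, hsub, hsopen, hts⟩
  rcases Metric.isOpen_iff.1 hsopen t0 hts with ⟨δ, hδ, hball⟩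
  set u := t0 + δ/2 with hu
  have htu : t0 < u := by simp [hu]; linarith
  have hpos : ∀ t ∈ Ioo t0 u, 0 < D t := by
    intro t ht
    have : t ∈ Metric.ball t0 δ := by
      rw [Metric.mem_ball, Real.dist_eq, abs_of_pos (sub_pos.2 ht.1)]
      have := ht.2; simp [hu] at this; linarith
    exact hsub (hball this) ht.1
  have hsm : StrictMonoOn x (Icc t0 u) := by
    apply strictMonoOn_of_deriv_pos (convex_Icc t0 u)
    · exact (Differentiable.continuous (fun t => (hx t).differentiableAt)).continuousOn
    · intro t ht
      rw [interior_Icc] at ht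
      rw [(hx t).deriv]
      exact hpos t ht
  have := hsm (left_mem_Icc.2 (le_of_lt htu)) (right_mem_Icc.2 (le_of_lt htu)) htu
  exact absurd (hmax u) (not_le.2 this)

lemma exists_global_max (x : ℝ → ℝ) (hx : Continuous x) {T : ℝ} (hT : 0 < T)
    (hper : Function.Periodic x T) : ∃ t0, ∀ t, x t ≤ x t0 := by
  obtain ⟨t0, ht0, hmax⟩ := isCompact_Icc.exists_isMaxOn (nonempty_Icc.2 hT.le)
    hx.continuousOn (s := Icc 0 T)
  refine ⟨t0, fun t => ?_⟩
  obtain ⟨s, hs, hxs⟩ := hper.exists_mem_Ico₀ hT t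
  rw [hxs]
  exact hmax (Ico_subset_Icc_self hs)

private lemma arith_W_bound {u v Fv Gv Kf Kg : ℝ} (hu : 0 ≤ u) (hv : 0 ≤ v)
    (hKf : 0 ≤ Kf) (hKg : 0 ≤ Kg)
    (hF : |Fv| ≤ Kf * max u v) (hG : |Gv| ≤ Kg * max u v) :
    2 * u * |Fv| + 2 * v * |Gv| ≤ (2 * Kf + 2 * Kg) * (u ^ 2 + v ^ 2) := by
  have hud : u * max u v ≤ u ^ 2 + v ^ 2 := by
    rcases max_cases u v with ⟨h, _⟩ | ⟨h, _⟩ <;> rw [h] <;> nlinarith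
  have hvd : v * max u v ≤ u ^ 2 + v ^ 2 := by
    rcases max_cases u v with ⟨h, _⟩ | ⟨h, _⟩ <;> rw [h] <;> nlinarith
  nlinarith [mul_le_mul_of_nonneg_left hF (by positivity : (0:ℝ) ≤ 2 * u),
    mul_le_mul_of_nonneg_left hG (by positivity : (0:ℝ) ≤ 2 * v),
    abs_nonneg Fv, abs_nonneg Gv]

private lemma arith_anti {e W C w : ℝ} (he : 0 < e) (hW : W ≤ C * w) :
    e * (-C) * w + e * W ≤ 0 := by nlinarith [mul_le_mul_of_nonneg_left hW he.le]

private lemma arith_mono {e W C w : ℝ} (he : 0 < e) (hW : -(C * w) ≤ W) :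
    0 ≤ e * C * w + e * W := by nlinarith [mul_le_mul_of_nonneg_left hW he.le]

private lemma arith_zero {e w : ℝ} (he : 0 < e) (hw : 0 ≤ w) (h : e * w ≤ 0) : w = 0 := by
  nlinarith

lemma const_of_equilibrium (f g : ℝ × ℝ → ℝ) (hf : ContDiff ℝ 1 f) (hg : ContDiff ℝ 1 g)
    (x y : ℝ → ℝ)
    (hx : ∀ t, HasDerivAt x (x t * f (x t, y t)) t)
    (hy : ∀ t, HasDerivAt y (y t * g (x t, y t)) t)
    (s1 : ℝ) (hfD : f (x s1, y s1) = 0) (hgD : g (x s1, y s1) = 0) :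
    ∀ t, x t = x s1 ∧ y t = y s1 := by
  set a := x s1 with ha
  set b := y s1 with hb
  set F : ℝ × ℝ → ℝ := fun p => p.1 * f p with hF
  set G : ℝ × ℝ → ℝ := fun p => p.2 * g p with hG
  have hFc : ContDiff ℝ 1 F := contDiff_fst.mul hf
  have hGc : ContDiff ℝ 1 G := contDiff_snd.mul hg
  have hFD : F (a, b) = 0 := by simp [hF, hfD]
  have hGD : G (a, b) = 0 := by simp [hG, hgD]
  obtain ⟨Kf, sf, hsf, hlf⟩ := hFc.contDiffAt.exists_lipschitzOnWith (x := (a, b))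
  obtain ⟨Kg, sg, hsg, hlg⟩ := hGc.contDiffAt.exists_lipschitzOnWith (x := (a, b))
  obtain ⟨ε, hε, hball⟩ := Metric.mem_nhds_iff.1 (Filter.inter_mem hsf hsg)
  set C : ℝ := 2 * Kf + 2 * Kg with hC
  have hC0 : (0:ℝ) ≤ C := by positivity
  set w : ℝ → ℝ := fun t => (x t - a) ^ 2 + (y t - b) ^ 2 with hw
  set W : ℝ → ℝ := fun t =>
    2 * (x t - a) * (x t * f (x t, y t)) + 2 * (y t - b) * (y t * g (x t, y t)) with hWdef
  have hwD : ∀ t, HasDerivAt w (W t) t := by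
    intro t
    have h1 : HasDerivAt (fun t => (x t - a) ^ 2)
        ((2:ℕ) * (x t - a) ^ 1 * (x t * f (x t, y t))) t := ((hx t).sub_const a).pow 2
    have h2 : HasDerivAt (fun t => (y t - b) ^ 2)
        ((2:ℕ) * (y t - b) ^ 1 * (y t * g (x t, y t))) t := ((hy t).sub_const b).pow 2
    have h3 := h1.add h2
    have heq : W t = (2:ℕ) * (x t - a) ^ 1 * (x t * f (x t, y t))
        + (2:ℕ) * (y t - b) ^ 1 * (y t * g (x t, y t)) := by
      simp only [hWdef, pow_one]
      push_cast
      ring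
    rw [heq]
    exact h3
  have hwnonneg : ∀ t, 0 ≤ w t := fun t => by positivity
  have hdx : Differentiable ℝ x := fun t => (hx t).differentiableAt
  have hdy : Differentiable ℝ y := fun t => (hy t).differentiableAt
  have hxc : Continuous x := hdx.continuous
  have hyc : Continuous y := hdy.continuous
  have hwc : Continuous w := by
    simp only [hw]
    continuity
  have hbound : ∀ t, (x t, y t) ∈ Metric.ball (a, b) ε → |W t| ≤ C * w t := by
    intro t hmem
    have hpf : (x t, y t) ∈ sf := (hball hmem).1
    have hpg : (x t, y t) ∈ sg := (hball hmem).2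
    have hdist : dist (x t, y t) (a, b) = max |x t - a| |y t - b| := by
      rw [Prod.dist_eq]
      simp [Real.dist_eq]
    have hFb : |F (x t, y t)| ≤ (Kf : ℝ) * max |x t - a| |y t - b| := by
      have h := hlf.dist_le_mul (x t, y t) hpf (a, b) (mem_of_mem_nhds hsf)
      rw [hdist] at h
      simpa [Real.dist_eq, hFD] using h
    have hGb : |G (x t, y t)| ≤ (Kg : ℝ) * max |x t - a| |y t - b| := by
      have h := hlg.dist_le_mul (x t, y t) hpg (a, b) (mem_of_mem_nhds hsg)
      rw [hdist] at h
      simpa [Real.dist_eq, hGD] using h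
    have habs : |W t| ≤ 2 * |x t - a| * |F (x t, y t)| + 2 * |y t - b| * |G (x t, y t)| := by
      have heq : W t = 2 * (x t - a) * F (x t, y t) + 2 * (y t - b) * G (x t, y t) := rfl
      rw [heq]
      refine (abs_add_le _ _).trans (le_of_eq ?_)
      simp only [abs_mul, abs_two]
    refine habs.trans ?_
    have := arith_W_bound (abs_nonneg (x t - a)) (abs_nonneg (y t - b))
      Kf.coe_nonneg Kg.coe_nonneg hFb hGb
    calc 2 * |x t - a| * |F (x t, y t)| + 2 * |y t - b| * |G (x t, y t)|
        ≤ (2 * Kf + 2 * Kg) * (|x t - a| ^ 2 + |y t - b| ^ 2) := this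
      _ = C * w t := by rw [hC, hw]; simp [sq_abs]
  set S : Set ℝ := {t | x t = a ∧ y t = b} with hS
  have hs1S : s1 ∈ S := ⟨rfl, rfl⟩
  have hSclosed : IsClosed S :=
    (isClosed_singleton.preimage hxc).inter (isClosed_singleton.preimage hyc)
  have hSopen : IsOpen S := by
    rw [Metric.isOpen_iff]
    intro t0 ht0
    have hq0 : (x t0, y t0) = (a, b) := by rw [ht0.1, ht0.2]
    have hcont : ContinuousAt (fun t => (x t, y t)) t0 := (hxc.prodMk hyc).continuousAt
    have hmem : (fun t => (x t, y t)) ⁻¹' Metric.ball (a, b) ε ∈ nhds t0 := by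
      apply hcont.preimage_mem_nhds
      rw [hq0]
      exact Metric.ball_mem_nhds _ hε
    obtain ⟨δ, hδ, hδball⟩ := Metric.mem_nhds_iff.1 hmem
    refine ⟨δ, hδ, fun t ht => ?_⟩
    have hwt0 : w t0 = 0 := by simp [hw, ht0.1, ht0.2]
    have hIcc : ∀ s' ∈ uIcc t0 t, (x s', y s') ∈ Metric.ball (a, b) ε := by
      intro s' hs'
      apply hδball
      rw [Metric.mem_ball, Real.dist_eq]
      rw [Metric.mem_ball, Real.dist_eq] at ht
      rw [mem_uIcc] at hs'
      rw [abs_sub_lt_iff] at *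
      rcases hs' with ⟨h1, h2⟩ | ⟨h1, h2⟩ <;> constructor <;> linarith [ht.1, ht.2]
    have hwt_zero : w t = 0 := by
      rcases le_total t0 t with hle | hle
      · set φ : ℝ → ℝ := fun s => Real.exp (-C * s) * w s with hφ
        have hφd : ∀ s, HasDerivAt φ (Real.exp (-C * s) * (-C) * w s
            + Real.exp (-C * s) * W s) s := by
          intro s
          have h1 : HasDerivAt (fun s : ℝ => -C * s) (-C) s := by
            simpa using (hasDerivAt_id s).const_mul (-C)
          exact (h1.exp).mul (hwD s)
        have hanti : AntitoneOn φ (Icc t0 t) := by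
          apply antitoneOn_of_deriv_nonpos (convex_Icc t0 t)
          · exact ((Real.continuous_exp.comp (continuous_const.mul continuous_id)).mul hwc).continuousOn
          · exact fun s _ => (hφd s).differentiableAt.differentiableWithinAt
          · intro s hs
            rw [interior_Icc] at hs
            rw [(hφd s).deriv]
            have hb := hbound s (hIcc s (by
              rw [uIcc_of_le hle]; exact Ioo_subset_Icc_self hs))
            exact arith_anti (Real.exp_pos _) (abs_le.1 hb).2
        have hle' := hanti (left_mem_Icc.2 hle) (right_mem_Icc.2 hle) hle
        have hφt0 : φ t0 = 0 := by simp [hφ, hwt0]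
        rw [hφt0] at hle'
        exact arith_zero (Real.exp_pos (-C * t)) (hwnonneg t) hle'
      · set φ : ℝ → ℝ := fun s => Real.exp (C * s) * w s with hφ
        have hφd : ∀ s, HasDerivAt φ (Real.exp (C * s) * C * w s
            + Real.exp (C * s) * W s) s := by
          intro s
          have h1 : HasDerivAt (fun s : ℝ => C * s) C s := by
            simpa using (hasDerivAt_id s).const_mul C
          exact (h1.exp).mul (hwD s)
        have hmono : MonotoneOn φ (Icc t t0) := by
          apply monotoneOn_of_deriv_nonneg (convex_Icc t t0)
          · exact ((Real.continuous_exp.comp (continuous_const.mul continuous_id)).mul hwc).continuousOn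
          · exact fun s _ => (hφd s).differentiableAt.differentiableWithinAt
          · intro s hs
            rw [interior_Icc] at hs
            rw [(hφd s).deriv]
            have hb := hbound s (hIcc s (by
              rw [uIcc_of_ge hle]; exact Ioo_subset_Icc_self hs))
            exact arith_mono (Real.exp_pos _) (abs_le.1 hb).1
        have hle' := hmono (left_mem_Icc.2 hle) (right_mem_Icc.2 hle) hle
        have hφt0 : φ t0 = 0 := by simp [hφ, hwt0]
        rw [hφt0] at hle'
        exact arith_zero (Real.exp_pos (C * t)) (hwnonneg t) hle'
    have hw' : (x t - a) ^ 2 + (y t - b) ^ 2 = 0 := hwt_zero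
    have h1 : x t - a = 0 := by nlinarith [sq_nonneg (x t - a), sq_nonneg (y t - b)]
    have h2 : y t - b = 0 := by nlinarith [sq_nonneg (x t - a), sq_nonneg (y t - b)]
    exact ⟨by linarith, by linarith⟩
  have hSuniv : S = univ := IsClopen.eq_univ ⟨hSclosed, hSopen⟩ ⟨s1, hs1S⟩
  intro t
  have : t ∈ S := by rw [hSuniv]; trivial
  exact this
/-- Theorem 4.1: on a convex open region of the positive quadrant where
∂f/∂y > 0, ∂g/∂x > 0 (strict mutualism) and ∂f/∂x > 0, ∂g/∂y > 0 (the sign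
configuration near a repulsive strictly mutualistic equilibrium), the system
ẋ = x f(x,y), ẏ = y g(x,y) has no nonconstant periodic solution contained in
the region; in particular no limit cycle lies in it. -/
theorem no_limit_cycle_strict_mutualism_repulsive
    (f g : ℝ × ℝ → ℝ) (hf : ContDiff ℝ 1 f) (hg : ContDiff ℝ 1 g)
    (U : Set (ℝ × ℝ)) (hUsub : U ⊆ Ioi (0:ℝ) ×ˢ Ioi (0:ℝ))
    (hUconv : Convex ℝ U) (hUopen : IsOpen U)
    (hfy : ∀ p ∈ U, pdy f p > 0) (hgx : ∀ p ∈ U, pdx g p > 0)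
    (hfx : ∀ p ∈ U, pdx f p > 0) (hgy : ∀ p ∈ U, pdy g p > 0) :
    ¬ ∃ x y : ℝ → ℝ,
      (∀ t, HasDerivAt x (x t * f (x t, y t)) t) ∧
      (∀ t, HasDerivAt y (y t * g (x t, y t)) t) ∧
      (∀ t, (x t, y t) ∈ U) ∧
      (∃ T > 0, ∀ t, x (t + T) = x t ∧ y (t + T) = y t) ∧
      (∃ t s, (x t, y t) ≠ (x s, y s)) := by
  rintro ⟨x, y, hx, hy, hU, ⟨T, hT, hper⟩, ⟨ta, tb, hne⟩⟩
  have hdx : Differentiable ℝ x := fun t => (hx t).differentiableAt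
  have hdy : Differentiable ℝ y := fun t => (hy t).differentiableAt
  have hxc : Continuous x := hdx.continuous
  have hyc : Continuous y := hdy.continuous
  have hxpos : ∀ t, 0 < x t := fun t => (hUsub (hU t)).1
  have hypos : ∀ t, 0 < y t := fun t => (hUsub (hU t)).2
  have hperx : Function.Periodic x T := fun t => (hper t).1
  have hpery : Function.Periodic y T := fun t => (hper t).2
  obtain ⟨t0, hmaxx⟩ := exists_global_max x hxc hT hperx
  obtain ⟨s1, hminy'⟩ := exists_global_max (fun t => -(y t)) hyc.neg hT
    (fun t => by simp [hpery t])
  have hminy : ∀ t, y s1 ≤ y t := fun t => by have := hminy' t; simp at this; linarith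
  have hxyD : ∀ t, HasDerivAt (fun t => (x t, y t))
      (x t * f (x t, y t), y t * g (x t, y t)) t := fun t => (hx t).prodMk (hy t)
  -- first order at the maximum of x
  have hfA : f (x t0, y t0) = 0 := by
    have hlm : IsLocalMax x t0 := Filter.Eventually.of_forall fun t => hmaxx t
    have h0 := hlm.hasDerivAt_eq_zero (hx t0)
    exact (mul_eq_zero.1 h0).resolve_left (ne_of_gt (hxpos t0))
  -- first order at the minimum of y
  have hgD : g (x s1, y s1) = 0 := by
    have hlm : IsLocalMin y s1 := Filter.Eventually.of_forall fun t => hminy t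
    have h0 := hlm.hasDerivAt_eq_zero (hy s1)
    exact (mul_eq_zero.1 h0).resolve_left (ne_of_gt (hypos s1))
  -- second order at the minimum of y : f ≥ 0 there
  have hfDnn : 0 ≤ f (x s1, y s1) := by
    by_contra hneg
    push_neg at hneg
    have hgq : HasDerivAt (fun t => g (x t, y t))
        (fderiv ℝ g (x s1, y s1) (x s1 * f (x s1, y s1), y s1 * g (x s1, y s1))) s1 :=
      ((hg.differentiable one_ne_zero _).hasFDerivAt).comp_hasDerivAt s1 (hxyD s1)
    have hYd := (hy s1).mul hgq
    set c0 : ℝ := y s1 * g (x s1, y s1) * g (x s1, y s1) +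
      y s1 * fderiv ℝ g (x s1, y s1) (x s1 * f (x s1, y s1), y s1 * g (x s1, y s1)) with hc0
    have hc0val : c0 = y s1 * (x s1 * f (x s1, y s1) * pdx g (x s1, y s1)) := by
      rw [hc0, fderiv_apply_pdx_pdy]
      simp [hgD]
    have hc0neg : c0 < 0 := by
      rw [hc0val]
      have h1 := hxpos s1
      have h2 := hypos s1
      have h3 := hgx _ (hU s1)
      have h4 : x s1 * f (x s1, y s1) < 0 := mul_neg_of_pos_of_neg h1 hneg
      have h5 : x s1 * f (x s1, y s1) * pdx g (x s1, y s1) < 0 := mul_neg_of_neg_of_pos h4 h3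
      exact mul_neg_of_pos_of_neg h2 h5
    exact aux_slope (x := fun t => -(y t)) (D := fun t => -(y t * g (x t, y t)))
      (fun t => (hy t).neg) (hYd.neg) (by simp [hgD]) (by linarith)
      (fun t => neg_le_neg (hminy t))
  -- hence x attains its maximum at s1 as well
  have hxs1 : x s1 = x t0 := by
    by_contra hne'
    have hlt : x s1 < x t0 := lt_of_le_of_ne (hmaxx s1) hne'
    have hmono := strict_mono_aux f hf U hUconv hfx hfy (hU s1) (hU t0)
      (le_of_lt hlt) (hminy t0) (fun h => hne' (congrArg Prod.fst h))
    rw [hfA] at hmono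
    exact absurd hmono (not_lt.2 hfDnn)
  -- so s1 is a global max of x, hence f vanishes there too
  have hfD : f (x s1, y s1) = 0 := by
    have hmax' : ∀ t, x t ≤ x s1 := fun t => hxs1 ▸ hmaxx t
    have hlm : IsLocalMax x s1 := Filter.Eventually.of_forall fun t => hmax' t
    have h0 := hlm.hasDerivAt_eq_zero (hx s1)
    exact (mul_eq_zero.1 h0).resolve_left (ne_of_gt (hxpos s1))
  -- the solution passes through an equilibrium, hence is constant
  have hconst := const_of_equilibrium f g hf hg x y hx hy s1 hfD hgD
  exact hne (by rw [(hconst ta).1, (hconst ta).2, (hconst tb).1, (hconst tb).2])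
end

section
/- Let f, g : ℝ² → ℝ be C¹ and let U ⊆ (0,∞)×(0,∞) be a convex open set on which ∂f/∂y > 0, ∂g/∂x > 0 (strict mutualism), ∂f/∂x < 0 and ∂g/∂y < 0 (the sign configuration near an attractive strictly mutualistic equilibrium). Then the system ẋ = x·f(x,y), ẏ = y·g(x,y) admits no nonconstant periodic solution whose image is contained in U; in particular, no (repulsive) limit cycle surrounding an attractive strictly mutualistic equilibrium can lie in U (Theorem 4.2). -/
open Set Topology Filter

lemma clm_apply_prod (L : ℝ × ℝ →L[ℝ] ℝ) (w : ℝ × ℝ) :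
    L w = w.1 * L (1, 0) + w.2 * L (0, 1) := by
  have hw : w = w.1 • ((1:ℝ), (0:ℝ)) + w.2 • ((0:ℝ), (1:ℝ)) := by
    simp [Prod.ext_iff]
  conv_lhs => rw [hw]
  rw [map_add, map_smul, map_smul, smul_eq_mul, smul_eq_mul]

lemma periodic_bounded {a : ℝ → ℝ} (hc : Continuous a) {T : ℝ} (hT : 0 < T)
    (hp : Function.Periodic a T) : ∃ C, 0 ≤ C ∧ ∀ t, |a t| ≤ C := by
  obtain ⟨C, hC⟩ := (isCompact_Icc (a := (0:ℝ)) (b := T)).exists_bound_of_continuousOn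
    hc.continuousOn
  refine ⟨max C 0, le_max_right _ _, fun t => ?_⟩
  obtain ⟨s, hs, hst⟩ := hp.exists_mem_Ico₀ hT t
  rw [hst]
  exact le_trans (by simpa [Real.norm_eq_abs] using hC s (Ico_subset_Icc_self hs)) (le_max_left _ _)

lemma no_neg_deriv_right {u : ℝ → ℝ} {t0 t2 d : ℝ} (h : t0 < t2)
    (hd : HasDerivAt u d t0) (hneg : d < 0) (hu0 : u t0 = 0)
    (hpos : ∀ r, t0 < r → r ≤ t2 → 0 < u r) : False := by
  have hs := (hasDerivAt_iff_tendsto_slope.mp hd)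
  have h1 : ∀ᶠ r in 𝓝[≠] t0, slope u t0 r < 0 :=
    hs.eventually (eventually_lt_nhds hneg)
  have h2 : ∀ᶠ r in 𝓝[>] t0, slope u t0 r < 0 :=
    h1.filter_mono (nhdsWithin_mono t0 (fun r hr => ne_of_gt hr))
  have h3 : Ioc t0 t2 ∈ 𝓝[>] t0 := Ioc_mem_nhdsGT_of_mem ⟨le_refl _, h⟩
  obtain ⟨r, hr1, hr2⟩ := (h2.and (Filter.eventually_mem_set.mpr h3)).exists
  have hur : 0 < u r := hpos r hr2.1 hr2.2
  have : 0 < slope u t0 r := by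
    rw [slope_def_field, hu0, sub_zero]
    exact div_pos hur (by linarith [hr2.1])
  linarith

lemma no_pos_deriv_left {u : ℝ → ℝ} {s τ d : ℝ} (h : s < τ)
    (hd : HasDerivAt u d τ) (hpos : 0 < d) (hu0 : u τ = 0)
    (hup : ∀ r, s ≤ r → r < τ → 0 < u r) : False := by
  have hs := (hasDerivAt_iff_tendsto_slope.mp hd)
  have h1 : ∀ᶠ r in 𝓝[≠] τ, 0 < slope u τ r :=
    hs.eventually (eventually_gt_nhds hpos)
  have h2 : ∀ᶠ r in 𝓝[<] τ, 0 < slope u τ r :=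
    h1.filter_mono (nhdsWithin_mono τ (fun r hr => ne_of_lt hr))
  have h3 : Ico s τ ∈ 𝓝[<] τ := Ico_mem_nhdsLT_of_mem ⟨h, le_refl _⟩
  obtain ⟨r, hr1, hr2⟩ := (h2.and (Filter.eventually_mem_set.mpr h3)).exists
  have hur : 0 < u r := hup r hr2.1 hr2.2
  have : slope u τ r < 0 := by
    rw [slope_def_field, hu0, sub_zero]
    exact div_neg_of_pos_of_neg hur (by linarith [hr2.2])
  linarith

lemma lim_nonneg_right {u : ℝ → ℝ} (hc : Continuous u) {t0 t2 : ℝ} (h : t0 < t2)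
    (hpos : ∀ r, t0 < r → r ≤ t2 → 0 < u r) : 0 ≤ u t0 := by
  have ht : Filter.Tendsto u (𝓝[>] t0) (𝓝 (u t0)) :=
    (hc.continuousAt).continuousWithinAt.tendsto
  refine ge_of_tendsto ht ?_
  filter_upwards [Ioc_mem_nhdsGT_of_mem (⟨le_refl _, h⟩ : t0 ∈ Ico t0 t2)] with r hr
  exact (hpos r hr.1 hr.2).le

lemma lim_nonneg_left {u : ℝ → ℝ} (hc : Continuous u) {s τ : ℝ} (h : s < τ)
    (hup : ∀ r, s ≤ r → r < τ → 0 < u r) : 0 ≤ u τ := by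
  have ht : Filter.Tendsto u (𝓝[<] τ) (𝓝 (u τ)) :=
    (hc.continuousAt).continuousWithinAt.tendsto
  refine ge_of_tendsto ht ?_
  filter_upwards [Ico_mem_nhdsLT_of_mem (⟨h, le_refl _⟩ : τ ∈ Ioc s τ)] with r hr
  exact (hup r hr.1 hr.2).le

/-- Theorem 4.2: on a convex open region of the positive quadrant where
∂f/∂y > 0, ∂g/∂x > 0 (strict mutualism) and ∂f/∂x < 0, ∂g/∂y < 0 (the sign
configuration near an attractive strictly mutualistic equilibrium), the system
ẋ = x f(x,y), ẏ = y g(x,y) has no nonconstant periodic solution contained in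
the region; in particular no limit cycle lies in it. -/
theorem no_limit_cycle_strict_mutualism_attractive
    (f g : ℝ × ℝ → ℝ) (hf : ContDiff ℝ 1 f) (hg : ContDiff ℝ 1 g)
    (U : Set (ℝ × ℝ)) (hUsub : U ⊆ Ioi (0:ℝ) ×ˢ Ioi (0:ℝ))
    (hUconv : Convex ℝ U) (hUopen : IsOpen U)
    (hfy : ∀ p ∈ U, pdy f p > 0) (hgx : ∀ p ∈ U, pdx g p > 0)
    (hfx : ∀ p ∈ U, pdx f p < 0) (hgy : ∀ p ∈ U, pdy g p < 0) :
    ¬ ∃ x y : ℝ → ℝ,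
      (∀ t, HasDerivAt x (x t * f (x t, y t)) t) ∧
      (∀ t, HasDerivAt y (y t * g (x t, y t)) t) ∧
      (∀ t, (x t, y t) ∈ U) ∧
      (∃ T > 0, ∀ t, x (t + T) = x t ∧ y (t + T) = y t) ∧
      (∃ t s, (x t, y t) ≠ (x s, y s)) := by
  rintro ⟨x, y, hx, hy, hU, ⟨T, hT, hper⟩, ta0, tb0, hne⟩
  have hxpos : ∀ t, 0 < x t := fun t => (hUsub (hU t)).1
  have hypos : ∀ t, 0 < y t := fun t => (hUsub (hU t)).2
  set u : ℝ → ℝ := fun t => f (x t, y t) with hu_def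
  set v : ℝ → ℝ := fun t => g (x t, y t) with hv_def
  set A : ℝ → ℝ := fun t => pdx f (x t, y t) * x t with hA_def
  set B : ℝ → ℝ := fun t => pdy f (x t, y t) * y t with hB_def
  set C : ℝ → ℝ := fun t => pdx g (x t, y t) * x t with hC_def
  set D : ℝ → ℝ := fun t => pdy g (x t, y t) * y t with hD_def
  have hxu : ∀ t, HasDerivAt x (x t * u t) t := hx
  have hyv : ∀ t, HasDerivAt y (y t * v t) t := hy
  have hxc : Continuous x := Differentiable.continuous (fun t => (hx t).differentiableAt)
  have hyc : Continuous y := Differentiable.continuous (fun t => (hy t).differentiableAt)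
  have hpc : Continuous (fun t => (x t, y t)) := hxc.prodMk hyc
  have huc : Continuous u := hf.continuous.comp hpc
  have hvc : Continuous v := hg.continuous.comp hpc
  have hfdc : Continuous (fun q : ℝ × ℝ => fderiv ℝ f q) := hf.continuous_fderiv one_ne_zero
  have hgdc : Continuous (fun q : ℝ × ℝ => fderiv ℝ g q) := hg.continuous_fderiv one_ne_zero
  have hAc : Continuous A := ((hfdc.comp hpc).clm_apply continuous_const).mul hxc
  have hBc : Continuous B := ((hfdc.comp hpc).clm_apply continuous_const).mul hyc
  have hCc : Continuous C := ((hgdc.comp hpc).clm_apply continuous_const).mul hxc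
  have hDc : Continuous D := ((hgdc.comp hpc).clm_apply continuous_const).mul hyc
  -- derivatives of u and v
  have hdu : ∀ t, HasDerivAt u (A t * u t + B t * v t) t := by
    intro t
    have hγ : HasDerivAt (fun t => (x t, y t)) (x t * u t, y t * v t) t :=
      (hxu t).prodMk (hyv t)
    have hfd : HasFDerivAt f (fderiv ℝ f (x t, y t)) (x t, y t) :=
      (hf.differentiable one_ne_zero (x t, y t)).hasFDerivAt
    have h := hfd.comp_hasDerivAt t hγ
    rw [clm_apply_prod] at h
    refine h.congr_deriv ?_
    simp only [hA_def, hB_def, pdx, pdy]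
    ring
  have hdv : ∀ t, HasDerivAt v (C t * u t + D t * v t) t := by
    intro t
    have hγ : HasDerivAt (fun t => (x t, y t)) (x t * u t, y t * v t) t :=
      (hxu t).prodMk (hyv t)
    have hgd : HasFDerivAt g (fderiv ℝ g (x t, y t)) (x t, y t) :=
      (hg.differentiable one_ne_zero (x t, y t)).hasFDerivAt
    have h := hgd.comp_hasDerivAt t hγ
    rw [clm_apply_prod] at h
    refine h.congr_deriv ?_
    simp only [hC_def, hD_def, pdx, pdy]
    ring
  -- periodicity
  have hxT : ∀ t, x (t + T) = x t := fun t => (hper t).1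
  have hyT : ∀ t, y (t + T) = y t := fun t => (hper t).2
  have hup : Function.Periodic u T := fun t => by simp only [hu_def, hxT t, hyT t]
  have hvp : Function.Periodic v T := fun t => by simp only [hv_def, hxT t, hyT t]
  have hAp : Function.Periodic A T := fun t => by simp only [hA_def, hxT t, hyT t]
  have hBp : Function.Periodic B T := fun t => by simp only [hB_def, hxT t, hyT t]
  have hCp : Function.Periodic C T := fun t => by simp only [hC_def, hxT t, hyT t]
  have hDp : Function.Periodic D T := fun t => by simp only [hD_def, hxT t, hyT t]
  -- signs
  have hBpos : ∀ t, 0 < B t := fun t => mul_pos (hfy _ (hU t)) (hypos t)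
  have hCpos : ∀ t, 0 < C t := fun t => mul_pos (hgx _ (hU t)) (hxpos t)
  -- global bound on coefficients
  obtain ⟨KA, hKA0, hKA⟩ := periodic_bounded hAc hT hAp
  obtain ⟨KB, hKB0, hKB⟩ := periodic_bounded hBc hT hBp
  obtain ⟨KC, hKC0, hKC⟩ := periodic_bounded hCc hT hCp
  obtain ⟨KD, hKD0, hKD⟩ := periodic_bounded hDc hT hDp
  set K : ℝ := max (max KA KB) (max KC KD) with hK_def
  have hK0 : 0 ≤ K := le_trans hKA0 (le_trans (le_max_left _ _) (le_max_left _ _))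
  have hKbA : ∀ t, |A t| ≤ K := fun t => le_trans (hKA t) (le_trans (le_max_left _ _) (le_max_left _ _))
  have hKbB : ∀ t, |B t| ≤ K := fun t => le_trans (hKB t) (le_trans (le_max_right _ _) (le_max_left _ _))
  have hKbC : ∀ t, |C t| ≤ K := fun t => le_trans (hKC t) (le_trans (le_max_left _ _) (le_max_right _ _))
  have hKbD : ∀ t, |D t| ≤ K := fun t => le_trans (hKD t) (le_trans (le_max_right _ _) (le_max_right _ _))
  -- shift lemma
  have shift : ∀ t c : ℝ, ∃ t', c < t' ∧ u t' = u t := by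
    intro t c
    obtain ⟨n, hn⟩ := exists_nat_gt ((c - t) / T)
    refine ⟨t + n * T, ?_, (hup.nat_mul n) t⟩
    have h1 : (c - t) < n * T := by
      have := (div_lt_iff₀ hT).mp hn
      linarith
    linarith
  -- Gronwall: zero propagates
  have hzero : ∀ t₁, u t₁ = 0 → v t₁ = 0 → ∀ t, u t = 0 := by
    intro t₁ hu1 hv1 t
    have key : ∀ b, ∀ r ∈ Icc t₁ b, u r = 0 := by
      intro b r hr
      have hF : ContinuousOn (fun t => (u t, v t)) (Icc t₁ b) :=
        (huc.prodMk hvc).continuousOn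
      have hF' : ∀ r ∈ Ico t₁ b, HasDerivWithinAt (fun t => (u t, v t))
          ((A r * u r + B r * v r, C r * u r + D r * v r)) (Ici r) r :=
        fun r _ => ((hdu r).prodMk (hdv r)).hasDerivWithinAt
      have hbound : ∀ r ∈ Ico t₁ b,
          ‖((A r * u r + B r * v r, C r * u r + D r * v r) : ℝ × ℝ)‖
            ≤ (2 * K) * ‖((u r, v r) : ℝ × ℝ)‖ + 0 := by
        intro r _
        rw [add_zero]
        have h1 : |u r| ≤ ‖((u r, v r) : ℝ × ℝ)‖ := by
          rw [Prod.norm_def, Real.norm_eq_abs, Real.norm_eq_abs]; exact le_max_left _ _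
        have h2 : |v r| ≤ ‖((u r, v r) : ℝ × ℝ)‖ := by
          rw [Prod.norm_def, Real.norm_eq_abs, Real.norm_eq_abs]; exact le_max_right _ _
        have hn0 : 0 ≤ ‖((u r, v r) : ℝ × ℝ)‖ := norm_nonneg _
        have e1 : |A r * u r + B r * v r| ≤ 2 * K * ‖((u r, v r) : ℝ × ℝ)‖ := by
          calc |A r * u r + B r * v r| ≤ |A r * u r| + |B r * v r| := abs_add_le _ _
            _ = |A r| * |u r| + |B r| * |v r| := by rw [abs_mul (A r) (u r), abs_mul (B r) (v r)]
            _ ≤ K * ‖((u r, v r) : ℝ × ℝ)‖ + K * ‖((u r, v r) : ℝ × ℝ)‖ :=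
                add_le_add (mul_le_mul (hKbA r) h1 (abs_nonneg _) hK0)
                  (mul_le_mul (hKbB r) h2 (abs_nonneg _) hK0)
            _ = 2 * K * ‖((u r, v r) : ℝ × ℝ)‖ := by ring
        have e2 : |C r * u r + D r * v r| ≤ 2 * K * ‖((u r, v r) : ℝ × ℝ)‖ := by
          calc |C r * u r + D r * v r| ≤ |C r * u r| + |D r * v r| := abs_add_le _ _
            _ = |C r| * |u r| + |D r| * |v r| := by rw [abs_mul (C r) (u r), abs_mul (D r) (v r)]
            _ ≤ K * ‖((u r, v r) : ℝ × ℝ)‖ + K * ‖((u r, v r) : ℝ × ℝ)‖ :=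
                add_le_add (mul_le_mul (hKbC r) h1 (abs_nonneg _) hK0)
                  (mul_le_mul (hKbD r) h2 (abs_nonneg _) hK0)
            _ = 2 * K * ‖((u r, v r) : ℝ × ℝ)‖ := by ring
        rw [Prod.norm_def, Real.norm_eq_abs, Real.norm_eq_abs]
        exact max_le e1 e2
      have hstart : ‖((u t₁, v t₁) : ℝ × ℝ)‖ ≤ 0 := by
        simp [hu1, hv1, Prod.norm_def]
      have hb := norm_le_gronwallBound_of_norm_deriv_right_le hF hF' hstart hbound r hr
      rw [gronwallBound_ε0_δ0] at hb
      have hz : ‖((u r, v r) : ℝ × ℝ)‖ = 0 := le_antisymm hb (norm_nonneg _)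
      have := norm_eq_zero.mp hz
      have := congrArg Prod.fst this
      simpa using this
    obtain ⟨n, hn⟩ := exists_nat_gt ((t₁ - t) / T)
    have h1 : t₁ ≤ t + n * T := by
      have := (div_lt_iff₀ hT).mp hn
      linarith
    have h2 : u (t + n * T) = u t := (hup.nat_mul n) t
    rw [← h2]
    exact key (t + n * T) (t + n * T) ⟨h1, le_refl _⟩
  -- if u ≡ 0 then constant solution, contradiction
  have hcon : (∀ t, u t = 0) → False := by
    intro h0
    have hv0 : ∀ t, v t = 0 := by
      intro t
      have h1 : HasDerivAt u 0 t := by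
        have hconst : u = fun _ => (0:ℝ) := funext h0
        rw [hconst]
        exact hasDerivAt_const t 0
      have h2 := (hdu t).unique h1
      rw [h0 t, mul_zero, zero_add] at h2
      have := hBpos t
      nlinarith [h2]
    have hxd0 : ∀ r, HasDerivAt x 0 r := fun r => by
      have := hxu r; rw [h0 r, mul_zero] at this; exact this
    have hyd0 : ∀ r, HasDerivAt y 0 r := fun r => by
      have := hyv r; rw [hv0 r, mul_zero] at this; exact this
    have hxconst : x ta0 = x tb0 :=
      is_const_of_deriv_eq_zero (fun t => (hxd0 t).differentiableAt)
        (fun t => (hxd0 t).deriv) ta0 tb0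
    have hyconst : y ta0 = y tb0 :=
      is_const_of_deriv_eq_zero (fun t => (hyd0 t).differentiableAt)
        (fun t => (hyd0 t).deriv) ta0 tb0
    exact hne (by rw [Prod.ext_iff]; exact ⟨hxconst, hyconst⟩)
  -- integral of u over a period is zero
  have hlog : ∀ t, HasDerivAt (fun s => Real.log (x s)) (u t) t := by
    intro t
    have h := (hxu t).log (ne_of_gt (hxpos t))
    have heq : x t * u t / x t = u t := by
      rw [mul_comm, mul_div_assoc, div_self (ne_of_gt (hxpos t)), mul_one]
    rwa [heq] at h
  have hint : (∫ s in (0:ℝ)..T, u s) = 0 := by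
    rw [intervalIntegral.integral_eq_sub_of_hasDerivAt (fun s _ => hlog s)
      (huc.intervalIntegrable 0 T)]
    have hxT0 : x T = x 0 := by simpa using hxT 0
    rw [hxT0, sub_self]
  -- trichotomy on sign of u
  by_cases hpos : ∃ t, 0 < u t
  swap
  · push_neg at hpos
    by_cases hneg : ∃ t, u t < 0
    · obtain ⟨t1, ht1⟩ := hneg
      obtain ⟨s, hs, hss⟩ := hup.exists_mem_Ico₀ hT t1
      have hlt : (∫ r in (0:ℝ)..T, u r) < ∫ r in (0:ℝ)..T, (0:ℝ) :=
        intervalIntegral.integral_lt_integral_of_continuousOn_of_le_of_exists_lt hT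
          huc.continuousOn continuousOn_const (fun r _ => hpos r)
          ⟨s, Ico_subset_Icc_self hs, by rw [← hss]; exact ht1⟩
      simp [hint] at hlt
    · push_neg at hneg
      exact hcon (fun t => le_antisymm (hpos t) (hneg t))
  obtain ⟨tp, htp⟩ := hpos
  by_cases hneg : ∃ t, u t < 0
  swap
  · push_neg at hneg
    obtain ⟨s, hs, hss⟩ := hup.exists_mem_Ico₀ hT tp
    have hlt : (∫ r in (0:ℝ)..T, (0:ℝ)) < ∫ r in (0:ℝ)..T, u r :=
      intervalIntegral.integral_lt_integral_of_continuousOn_of_le_of_exists_lt hT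
        continuousOn_const huc.continuousOn (fun r _ => hneg r)
        ⟨s, Ico_subset_Icc_self hs, by rw [← hss]; exact htp⟩
    simp [hint] at hlt
  obtain ⟨t1, ht1⟩ := hneg
  -- find t2 > t1 with u t2 > 0
  obtain ⟨t2, ht12, ht2u⟩ := shift tp t1
  have ht2pos : 0 < u t2 := by rw [ht2u]; exact htp
  -- upward crossing point t0
  have hS1closed : IsClosed {r | r ∈ Icc t1 t2 ∧ u r ≤ 0} := by
    have : {r | r ∈ Icc t1 t2 ∧ u r ≤ 0} = Icc t1 t2 ∩ {r | u r ≤ 0} := rfl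
    rw [this]
    exact isClosed_Icc.inter (isClosed_le huc continuous_const)
  have hS1ne : {r | r ∈ Icc t1 t2 ∧ u r ≤ 0}.Nonempty :=
    ⟨t1, ⟨le_refl _, ht12.le⟩, ht1.le⟩
  have hS1bdd : BddAbove {r | r ∈ Icc t1 t2 ∧ u r ≤ 0} := ⟨t2, fun r hr => hr.1.2⟩
  set t0 := sSup {r | r ∈ Icc t1 t2 ∧ u r ≤ 0} with ht0_def
  have ht0mem : t0 ∈ {r | r ∈ Icc t1 t2 ∧ u r ≤ 0} := hS1closed.csSup_mem hS1ne hS1bdd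
  have ht0le : t0 ≤ t2 := ht0mem.1.2
  have ht0ge : t1 ≤ t0 := ht0mem.1.1
  have ht0lt : t0 < t2 := lt_of_le_of_ne ht0le (by
    intro h
    rw [h] at ht0mem
    linarith [ht0mem.2])
  have hupos1 : ∀ r, t0 < r → r ≤ t2 → 0 < u r := by
    intro r hr1 hr2
    by_contra hle
    push_neg at hle
    have hmem : r ∈ {r | r ∈ Icc t1 t2 ∧ u r ≤ 0} := ⟨⟨le_trans ht0ge hr1.le, hr2⟩, hle⟩
    have := le_csSup hS1bdd hmem
    rw [← ht0_def] at this
    linarith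
  have hu0 : u t0 = 0 := le_antisymm ht0mem.2 (lim_nonneg_right huc ht0lt hupos1)
  have hdu0 : HasDerivAt u (B t0 * v t0) t0 := by
    have h := hdu t0
    rwa [hu0, mul_zero, zero_add] at h
  have hvt0 : 0 < v t0 := by
    rcases lt_trichotomy (v t0) 0 with h | h | h
    · exact (no_neg_deriv_right ht0lt hdu0 (mul_neg_of_pos_of_neg (hBpos t0) h)
        hu0 hupos1).elim
    · have := hzero t0 hu0 h t2
      linarith
    · exact h
  -- enter the positive quadrant at some s0
  have hvev : ∀ᶠ r in 𝓝[>] t0, 0 < v r :=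
    ((hvc.tendsto t0).eventually (eventually_gt_nhds hvt0)).filter_mono nhdsWithin_le_nhds
  obtain ⟨s0, hs0v, hs0mem⟩ :=
    (hvev.and (Filter.eventually_mem_set.mpr
      (Ioc_mem_nhdsGT_of_mem (⟨le_refl _, ht0lt⟩ : t0 ∈ Ico t0 t2)))).exists
  have hs0u : 0 < u s0 := hupos1 s0 hs0mem.1 hs0mem.2
  -- forward invariance contradiction
  obtain ⟨tb, htbs, htbu⟩ := shift t1 s0
  have hub : u tb < 0 := by rw [htbu]; exact ht1
  have hS2closed : IsClosed {r | r ∈ Icc s0 tb ∧ (u r ≤ 0 ∨ v r ≤ 0)} := by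
    have : {r | r ∈ Icc s0 tb ∧ (u r ≤ 0 ∨ v r ≤ 0)}
        = Icc s0 tb ∩ ({r | u r ≤ 0} ∪ {r | v r ≤ 0}) := rfl
    rw [this]
    exact isClosed_Icc.inter ((isClosed_le huc continuous_const).union
      (isClosed_le hvc continuous_const))
  have hS2ne : {r | r ∈ Icc s0 tb ∧ (u r ≤ 0 ∨ v r ≤ 0)}.Nonempty :=
    ⟨tb, ⟨htbs.le, le_refl _⟩, Or.inl hub.le⟩
  have hS2bdd : BddBelow {r | r ∈ Icc s0 tb ∧ (u r ≤ 0 ∨ v r ≤ 0)} :=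
    ⟨s0, fun r hr => hr.1.1⟩
  set τ := sInf {r | r ∈ Icc s0 tb ∧ (u r ≤ 0 ∨ v r ≤ 0)} with hτ_def
  have hτmem : τ ∈ {r | r ∈ Icc s0 tb ∧ (u r ≤ 0 ∨ v r ≤ 0)} :=
    hS2closed.csInf_mem hS2ne hS2bdd
  have hsτ : s0 ≤ τ := hτmem.1.1
  have hτlt : s0 < τ := lt_of_le_of_ne hsτ (by
    intro h
    rw [← h] at hτmem
    rcases hτmem.2 with h' | h' <;> linarith)
  have hpos2 : ∀ r, s0 ≤ r → r < τ → 0 < u r ∧ 0 < v r := by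
    intro r h1 h2
    rcases le_or_gt (u r) 0 with h3 | h3
    · have hmem : r ∈ {r | r ∈ Icc s0 tb ∧ (u r ≤ 0 ∨ v r ≤ 0)} :=
        ⟨⟨h1, le_trans h2.le hτmem.1.2⟩, Or.inl h3⟩
      have := csInf_le hS2bdd hmem
      rw [← hτ_def] at this
      linarith
    rcases le_or_gt (v r) 0 with h4 | h4
    · have hmem : r ∈ {r | r ∈ Icc s0 tb ∧ (u r ≤ 0 ∨ v r ≤ 0)} :=
        ⟨⟨h1, le_trans h2.le hτmem.1.2⟩, Or.inr h4⟩
      have := csInf_le hS2bdd hmem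
      rw [← hτ_def] at this
      linarith
    exact ⟨h3, h4⟩
  have huτ : 0 ≤ u τ := lim_nonneg_left huc hτlt (fun r h1 h2 => (hpos2 r h1 h2).1)
  have hvτ : 0 ≤ v τ := lim_nonneg_left hvc hτlt (fun r h1 h2 => (hpos2 r h1 h2).2)
  rcases hτmem.2 with h | h
  · have huτ0 : u τ = 0 := le_antisymm h huτ
    rcases eq_or_lt_of_le hvτ with hv0 | hv0
    · have := hzero τ huτ0 hv0.symm tb
      linarith
    · have hdup : HasDerivAt u (B τ * v τ) τ := by
        have h' := hdu τ
        rwa [huτ0, mul_zero, zero_add] at h'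
      exact no_pos_deriv_left hτlt hdup (mul_pos (hBpos τ) hv0) huτ0
        (fun r h1 h2 => (hpos2 r h1 h2).1)
  · have hvτ0 : v τ = 0 := le_antisymm h hvτ
    rcases eq_or_lt_of_le huτ with hu0' | hu0'
    · have := hzero τ hu0'.symm hvτ0 tb
      linarith
    · have hdvp : HasDerivAt v (C τ * u τ) τ := by
        have h' := hdv τ
        rwa [hvτ0, mul_zero, add_zero] at h'
      exact no_pos_deriv_left hτlt hdvp (mul_pos (hCpos τ) hu0') hvτ0
        (fun r h1 h2 => (hpos2 r h1 h2).2)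
end

section
/- Let f, g : ℝ² → ℝ be C¹, let a, b > 0, and suppose f(a,y) < 0 for all y ∈ [0,b] and g(x,b) < 0 for all x ∈ [0,a]. Then the rectangle [0,a]×[0,b] is positively invariant: for every solution (x(t), y(t)) of the system ẋ = x·f(x,y), ẏ = y·g(x,y) defined on an interval [0,T] with (x(0), y(0)) ∈ [0,a]×[0,b], one has (x(t), y(t)) ∈ [0,a]×[0,b] for all t ∈ [0,T] (the trapping-region step in the proofs of Theorems 4.3 and 4.4: no trajectory can exit across the boundary of the rectangular region). -/
open Set Filter Topology

/-- If a function has negative derivative within `s` at `t₀`, then it is strictly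
smaller than its value at `t₀` slightly to the right of `t₀` (within `s`). -/
lemma slope_neg_right {s : Set ℝ} {h : ℝ → ℝ} {t₀ c : ℝ}
    (hd : HasDerivWithinAt h c s t₀) (hc : c < 0) :
    ∃ δ > 0, ∀ t ∈ s, t₀ < t → t < t₀ + δ → h t < h t₀ := by
  have H := hasDerivWithinAt_iff_tendsto_slope.mp hd
  have H2 : ∀ᶠ t in 𝓝[s \ {t₀}] t₀, slope h t₀ t < 0 := H.eventually (gt_mem_nhds hc)
  obtain ⟨δ, hδ, hδ'⟩ := Metric.mem_nhdsWithin_iff.mp H2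
  refine ⟨δ, hδ, fun t ht h1 h2 => ?_⟩
  have hs : slope h t₀ t < 0 := hδ'
    ⟨Metric.mem_ball.mpr (by rw [Real.dist_eq, abs_of_pos (by linarith)]; linarith),
     ht, by simp [ne_of_gt h1]⟩
  rw [slope_def_field] at hs
  rcases div_neg_iff.mp hs with ⟨_, h'⟩ | ⟨h', _⟩ <;> linarith

/-- If `z' = z * F` with `F` continuous on `[0,T]` and `z 0 ≥ 0`, then `z ≥ 0` on `[0,T]`. -/
lemma nonneg_of_hasDeriv_mul {T : ℝ} {z F : ℝ → ℝ}
    (hz : ∀ t ∈ Icc (0:ℝ) T, HasDerivWithinAt z (z t * F t) (Icc 0 T) t)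
    (hF : ContinuousOn F (Icc 0 T)) (h0 : 0 ≤ z 0) :
    ∀ t ∈ Icc (0:ℝ) T, 0 ≤ z t := by
  intro t₁ ht₁
  by_contra hneg
  push_neg at hneg
  have hzc : ContinuousOn z (Icc 0 T) := fun s hs => (hz s hs).continuousWithinAt
  obtain ⟨K, hK⟩ := isCompact_Icc.exists_bound_of_continuousOn hF
  set K' := max K 0 with hK'def
  have hK'0 : 0 ≤ K' := le_max_right _ _
  have hKb : ∀ s ∈ Icc (0:ℝ) T, |F s| ≤ K' := fun s hs =>
    le_trans (hK s hs) (le_max_left _ _)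
  have hsub : Icc (0:ℝ) t₁ ⊆ Icc 0 T := Icc_subset_Icc le_rfl ht₁.2
  -- there is a zero of z in [0, t₁]
  have hIVT : ∃ s ∈ Icc (0:ℝ) t₁, z s = 0 := by
    have := intermediate_value_Icc' ht₁.1 (hzc.mono hsub)
    have h0mem : (0:ℝ) ∈ Icc (z t₁) (z 0) := ⟨le_of_lt hneg, h0⟩
    obtain ⟨s, hs, hz0⟩ := this h0mem
    exact ⟨s, hs, hz0⟩
  set Z : Set ℝ := Icc 0 t₁ ∩ z ⁻¹' {0} with hZdef
  have hZne : Z.Nonempty := by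
    obtain ⟨s, hs, hz0⟩ := hIVT
    exact ⟨s, hs, by simpa using hz0⟩
  have hZbdd : BddAbove Z := BddAbove.mono inter_subset_left bddAbove_Icc
  have hZclosed : IsClosed Z :=
    (hzc.mono hsub).preimage_isClosed_of_isClosed isClosed_Icc isClosed_singleton
  set t₀ := sSup Z with ht₀def
  have ht₀Z : t₀ ∈ Z := hZclosed.csSup_mem hZne hZbdd
  have hzt₀ : z t₀ = 0 := by simpa using ht₀Z.2
  have ht₀mem : t₀ ∈ Icc (0:ℝ) t₁ := ht₀Z.1
  -- Gronwall on [t₀, t₁]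
  have hcont : ContinuousOn z (Icc t₀ t₁) :=
    hzc.mono (fun u hu => ⟨le_trans ht₀mem.1 hu.1, le_trans hu.2 ht₁.2⟩)
  have hderiv : ∀ s ∈ Ico t₀ t₁, HasDerivWithinAt z (z s * F s) (Ici s) s := by
    intro s hs
    have hsmem : s ∈ Icc (0:ℝ) T := ⟨le_trans ht₀mem.1 hs.1, le_trans (le_of_lt hs.2) ht₁.2⟩
    refine (hz s hsmem).mono_of_mem_nhdsWithin ?_
    rw [mem_nhdsWithin]
    refine ⟨Iio T, isOpen_Iio, lt_of_lt_of_le hs.2 ht₁.2, ?_⟩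
    rintro u ⟨hu1, hu2⟩
    exact ⟨le_trans hsmem.1 hu2, le_of_lt hu1⟩
  have hbound : ∀ s ∈ Ico t₀ t₁, ‖z s * F s‖ ≤ K' * ‖z s‖ + 0 := by
    intro s hs
    have hsmem : s ∈ Icc (0:ℝ) T := ⟨le_trans ht₀mem.1 hs.1, le_trans (le_of_lt hs.2) ht₁.2⟩
    rw [add_zero, Real.norm_eq_abs, Real.norm_eq_abs, abs_mul, mul_comm]
    exact mul_le_mul_of_nonneg_right (hKb s hsmem) (abs_nonneg _)
  have hinitz : ‖z t₀‖ ≤ 0 := by rw [hzt₀]; simp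
  have := norm_le_gronwallBound_of_norm_deriv_right_le hcont hderiv hinitz hbound t₁
    ⟨ht₀mem.2, le_rfl⟩
  rw [gronwallBound_ε0_δ0] at this
  have : |z t₁| ≤ 0 := this
  have : z t₁ = 0 := abs_nonpos_iff.mp this
  linarith

/-- Trapping-region step in the proofs of Theorems 4.3 and 4.4: if the vector
field of ẋ = x f(x,y), ẏ = y g(x,y) points inward on the right and top edges
of the rectangle [0,a]×[0,b], then the rectangle is positively invariant:
no solution starting in it can exit across its boundary. -/
theorem rectangle_positively_invariant
    (f g : ℝ × ℝ → ℝ) (hf : ContDiff ℝ 1 f) (hg : ContDiff ℝ 1 g)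
    (a b : ℝ) (ha : 0 < a) (hb : 0 < b)
    (hright : ∀ y ∈ Icc (0:ℝ) b, f (a, y) < 0)
    (htop : ∀ x ∈ Icc (0:ℝ) a, g (x, b) < 0)
    (T : ℝ) (x y : ℝ → ℝ)
    (hx : ∀ t ∈ Icc (0:ℝ) T, HasDerivWithinAt x (x t * f (x t, y t)) (Icc 0 T) t)
    (hy : ∀ t ∈ Icc (0:ℝ) T, HasDerivWithinAt y (y t * g (x t, y t)) (Icc 0 T) t)
    (hinit : x 0 ∈ Icc (0:ℝ) a ∧ y 0 ∈ Icc (0:ℝ) b) :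
    ∀ t ∈ Icc (0:ℝ) T, x t ∈ Icc (0:ℝ) a ∧ y t ∈ Icc (0:ℝ) b := by
  have hxc : ContinuousOn x (Icc 0 T) := fun s hs => (hx s hs).continuousWithinAt
  have hyc : ContinuousOn y (Icc 0 T) := fun s hs => (hy s hs).continuousWithinAt
  have hFc : ContinuousOn (fun t => f (x t, y t)) (Icc 0 T) :=
    hf.continuous.comp_continuousOn (ContinuousOn.prodMk hxc hyc)
  have hGc : ContinuousOn (fun t => g (x t, y t)) (Icc 0 T) :=
    hg.continuous.comp_continuousOn (ContinuousOn.prodMk hxc hyc)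
  have hxnn : ∀ t ∈ Icc (0:ℝ) T, 0 ≤ x t := nonneg_of_hasDeriv_mul hx hFc hinit.1.1
  have hynn : ∀ t ∈ Icc (0:ℝ) T, 0 ≤ y t := nonneg_of_hasDeriv_mul hy hGc hinit.2.1
  by_contra hcon
  push_neg at hcon
  obtain ⟨t₁, ht₁, hbad₁⟩ := hcon
  have hbad' : a < x t₁ ∨ b < y t₁ := by
    by_contra h
    push_neg at h
    exact hbad₁ ⟨hxnn t₁ ht₁, h.1⟩ ⟨hynn t₁ ht₁, h.2⟩
  set Bad : Set ℝ := {t | t ∈ Icc (0:ℝ) T ∧ (a < x t ∨ b < y t)} with hBaddef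
  have hne : Bad.Nonempty := ⟨t₁, ht₁, hbad'⟩
  have hbdd : BddBelow Bad := ⟨0, fun s hs => hs.1.1⟩
  set t₀ := sInf Bad with ht₀def
  obtain ⟨s₁, hs₁⟩ := hne
  have ht₀mem : t₀ ∈ Icc (0:ℝ) T :=
    ⟨le_csInf ⟨s₁, hs₁⟩ fun s hs => hs.1.1, le_trans (csInf_le hbdd hs₁) hs₁.1.2⟩
  have hbefore : ∀ s, s ∈ Icc (0:ℝ) T → s < t₀ → x s ≤ a ∧ y s ≤ b := by
    intro s hs hst
    have hnm : s ∉ Bad := fun hmem => absurd (csInf_le hbdd hmem) (not_le.mpr hst)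
    have hnot : ¬ (a < x s ∨ b < y s) := fun hor => hnm ⟨hs, hor⟩
    push_neg at hnot
    exact hnot
  have ht₀le : x t₀ ≤ a ∧ y t₀ ≤ b := by
    rcases eq_or_lt_of_le ht₀mem.1 with h0 | h0
    · rw [← h0]; exact ⟨hinit.1.2, hinit.2.2⟩
    · have hsubI : Ico (0:ℝ) t₀ ⊆ Icc 0 T :=
        fun u hu => ⟨hu.1, le_trans (le_of_lt hu.2) ht₀mem.2⟩
      have hclos : t₀ ∈ closure (Ico (0:ℝ) t₀) := by
        rw [closure_Ico (ne_of_lt h0)]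
        exact ⟨le_of_lt h0, le_rfl⟩
      haveI : (𝓝[Ico (0:ℝ) t₀] t₀).NeBot := mem_closure_iff_nhdsWithin_neBot.mp hclos
      have hxlim : Tendsto x (𝓝[Ico (0:ℝ) t₀] t₀) (𝓝 (x t₀)) :=
        ((hxc t₀ ht₀mem).mono hsubI).tendsto
      have hylim : Tendsto y (𝓝[Ico (0:ℝ) t₀] t₀) (𝓝 (y t₀)) :=
        ((hyc t₀ ht₀mem).mono hsubI).tendsto
      constructor
      · refine le_of_tendsto hxlim (eventually_nhdsWithin_of_forall fun s hs => ?_)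
        exact (hbefore s (hsubI hs) hs.2).1
      · refine le_of_tendsto hylim (eventually_nhdsWithin_of_forall fun s hs => ?_)
        exact (hbefore s (hsubI hs) hs.2).2
  have ht₀notBad : t₀ ∉ Bad := by
    rintro ⟨-, h | h⟩
    · exact absurd ht₀le.1 (not_le.mpr h)
    · exact absurd ht₀le.2 (not_le.mpr h)
  have hxstep : ∃ δ > 0, ∀ t ∈ Icc (0:ℝ) T, t₀ < t → t < t₀ + δ → x t ≤ a := by
    rcases eq_or_lt_of_le ht₀le.1 with heq | hlt
    · have hy0 : y t₀ ∈ Icc (0:ℝ) b := ⟨hynn t₀ ht₀mem, ht₀le.2⟩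
      have hneg : x t₀ * f (x t₀, y t₀) < 0 := by
        rw [heq]; exact mul_neg_of_pos_of_neg ha (hright _ hy0)
      obtain ⟨δ, hδ, hδ'⟩ := slope_neg_right (hx t₀ ht₀mem) hneg
      exact ⟨δ, hδ, fun t ht h1 h2 =>
        le_of_lt (lt_of_lt_of_le (hδ' t ht h1 h2) (le_of_eq heq))⟩
    · have hev : ∀ᶠ s in 𝓝[Icc (0:ℝ) T] t₀, x s < a :=
        (hxc t₀ ht₀mem).eventually (gt_mem_nhds hlt)
      obtain ⟨δ, hδ, hδ'⟩ := Metric.mem_nhdsWithin_iff.mp hev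
      refine ⟨δ, hδ, fun t ht h1 h2 => le_of_lt (hδ' ⟨?_, ht⟩)⟩
      exact Metric.mem_ball.mpr (by rw [Real.dist_eq, abs_of_pos (by linarith)]; linarith)
  have hystep : ∃ δ > 0, ∀ t ∈ Icc (0:ℝ) T, t₀ < t → t < t₀ + δ → y t ≤ b := by
    rcases eq_or_lt_of_le ht₀le.2 with heq | hlt
    · have hx0 : x t₀ ∈ Icc (0:ℝ) a := ⟨hxnn t₀ ht₀mem, ht₀le.1⟩
      have hneg : y t₀ * g (x t₀, y t₀) < 0 := by
        rw [heq]; exact mul_neg_of_pos_of_neg hb (htop _ hx0)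
      obtain ⟨δ, hδ, hδ'⟩ := slope_neg_right (hy t₀ ht₀mem) hneg
      exact ⟨δ, hδ, fun t ht h1 h2 =>
        le_of_lt (lt_of_lt_of_le (hδ' t ht h1 h2) (le_of_eq heq))⟩
    · have hev : ∀ᶠ s in 𝓝[Icc (0:ℝ) T] t₀, y s < b :=
        (hyc t₀ ht₀mem).eventually (gt_mem_nhds hlt)
      obtain ⟨δ, hδ, hδ'⟩ := Metric.mem_nhdsWithin_iff.mp hev
      refine ⟨δ, hδ, fun t ht h1 h2 => le_of_lt (hδ' ⟨?_, ht⟩)⟩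
      exact Metric.mem_ball.mpr (by rw [Real.dist_eq, abs_of_pos (by linarith)]; linarith)
  obtain ⟨δ₁, hδ₁, hδ₁'⟩ := hxstep
  obtain ⟨δ₂, hδ₂, hδ₂'⟩ := hystep
  have hex : ∃ s ∈ Bad, s < t₀ + min δ₁ δ₂ := by
    by_contra hno
    push_neg at hno
    have : t₀ + min δ₁ δ₂ ≤ t₀ := le_csInf ⟨s₁, hs₁⟩ hno
    have : 0 < min δ₁ δ₂ := lt_min hδ₁ hδ₂
    linarith
  obtain ⟨s, hsB, hslt⟩ := hex
  have hst₀ : t₀ < s := by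
    rcases eq_or_lt_of_le (csInf_le hbdd hsB) with h | h
    · exact absurd (show t₀ ∈ Bad by rw [ht₀def, h]; exact hsB) ht₀notBad
    · exact h
  have hxs : x s ≤ a :=
    hδ₁' s hsB.1 hst₀ (lt_of_lt_of_le hslt (add_le_add_right (min_le_left _ _) _))
  have hys : y s ≤ b :=
    hδ₂' s hsB.1 hst₀ (lt_of_lt_of_le hslt (add_le_add_right (min_le_right _ _) _))
  rcases hsB.2 with h | h <;> linarith
end
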